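/- arXiv:1302.2991 — 6 statements merged into one kernel-verified Lean document; each statement's English description precedes it below -/
import Mathlib

section
/- Let 𝒵 be a noetherian abelian category of homological dimension at most n (n a non-negative integer) and let T be an object of 𝒵. For 0 ≤ i ≤ n set B_i := {E ∈ 𝒵 : Ext^i(T,E) = 0}. For 1 ≤ i ≤ n set 𝒯_i := [B_i ∩ B_{i+1} ∩ … ∩ B_n] and ℱ_i := 𝒯_i°, and set 𝒯_{n+1} := 𝒵 and ℱ_0 := 𝒵. Then every object E of 𝒵 admits a unique filtration 0 = E_0 ⊆ E_1 ⊆ … ⊆ E_n ⊆ E_{n+1} = E such that for all 1 ≤ i ≤ n+1 one has E_i ∈ 𝒯_i and E_i/E_{i-1} ∈ 𝒯_i ∩ ℱ_{i-1}. Moreover each subcategory 𝒯_i ∩ ℱ_{i-1} is closed under extensions, and for i ≠ j the only object lying in both 𝒯_i ∩ ℱ_{i-1} and 𝒯_j ∩ ℱ_{j-1} is the zero object. -/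
open CategoryTheory Limits Abelian

namespace TorsionPairs

universe w w' v u v' u'

variable {C : Type u} [Category.{v} C] [Abelian C]

/-- `f : X ⟶ Y` and `g : Y ⟶ Z` form a short exact sequence `0 ⟶ X ⟶ Y ⟶ Z ⟶ 0` in `C`. -/
def IsShortExactSeq {X Y Z : C} (f : X ⟶ Y) (g : Y ⟶ Z) : Prop :=
  ∃ w : f ≫ g = 0, (ShortComplex.mk f g w).ShortExact

/-- The right perpendicular class `𝒱°` of a class of objects `𝒱` (given as a predicate):
the objects `E` with `Hom(V, E) = 0` for all `V ∈ 𝒱`. -/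
def Perp (P : C → Prop) : C → Prop := fun E => ∀ (V : C), P V → ∀ f : V ⟶ E, f = 0

/-- A class of objects is closed under quotient objects. -/
def ClosedUnderQuotients (P : C → Prop) : Prop :=
  ∀ ⦃X Q : C⦄ (p : X ⟶ Q), Epi p → P X → P Q

/-- A class of objects is closed under extensions. -/
def ClosedUnderExt (P : C → Prop) : Prop :=
  ∀ ⦃X E Y : C⦄ (f : X ⟶ E) (g : E ⟶ Y), IsShortExactSeq f g → P X → P Y → P E

/-- `(T, F)` is a torsion pair in the abelian category `C`: `Hom(X, Y) = 0` whenever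
`T X` and `F Y`, and every object `E` fits into a short exact sequence
`0 ⟶ X ⟶ E ⟶ Y ⟶ 0` with `T X` and `F Y`. -/
def IsTorsionPair (T F : C → Prop) : Prop :=
  (∀ (X Y : C), T X → F Y → ∀ f : X ⟶ Y, f = 0) ∧
  (∀ E : C, ∃ (X Y : C) (f : X ⟶ E) (g : E ⟶ Y), T X ∧ F Y ∧ IsShortExactSeq f g)

/-- The extension closure of a class of objects: the smallest class of objects containing
the zero objects and the given class, and closed under extensions. -/
inductive ExtClosure (P : C → Prop) : C → Prop
  | zero (X : C) (hX : IsZero X) : ExtClosure P X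
  | of (X : C) (hX : P X) : ExtClosure P X
  | ext {X E Y : C} (f : X ⟶ E) (g : E ⟶ Y) (h : IsShortExactSeq f g)
      (hX : ExtClosure P X) (hY : ExtClosure P Y) : ExtClosure P E

/-- The class of quotient objects of objects of `S`. -/
def QuotClass (S : C → Prop) : C → Prop := fun E => ∃ (E' : C) (p : E' ⟶ E), Epi p ∧ S E'

/-- `[S]`: the extension closure of the class of quotient objects of objects of `S`. -/
def ExtClosQuot (S : C → Prop) : C → Prop := ExtClosure (QuotClass S)

-- ### auxiliary lemmas

open CategoryTheory.Abelian.Pseudoelement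
open scoped Pseudoelement

lemma perp_of_mono {P : C → Prop} {X Y : C} (i : X ⟶ Y) [Mono i] (hY : Perp P Y) :
    Perp P X := fun V hV f => by
  have h := hY V hV (f ≫ i)
  rw [← cancel_mono i, h, zero_comp]

lemma perp_ext (P : C → Prop) : ClosedUnderExt (Perp P) := by
  intro X E Y f g hse hX hY V hV h
  obtain ⟨w, hS⟩ := hse
  obtain ⟨l, hl⟩ := KernelFork.IsLimit.lift' hS.fIsKernel h (hY V hV (h ≫ g))
  rw [← hl, hX V hV l, zero_comp]

lemma extClosure_mono {P Q : C → Prop} (h : ∀ X, P X → Q X) {X : C}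
    (hX : ExtClosure P X) : ExtClosure Q X := by
  induction hX with
  | zero X hX => exact .zero X hX
  | of X hX => exact .of X (h X hX)
  | ext f g hse _ _ ihX ihY => exact .ext f g hse ihX ihY

lemma extClosQuot_mono {P Q : C → Prop} (h : ∀ X, P X → Q X) {X : C}
    (hX : ExtClosQuot P X) : ExtClosQuot Q X :=
  extClosure_mono (fun X => fun ⟨E', p, hp, hS⟩ => ⟨E', p, hp, h E' hS⟩) hX

lemma extClosQuot_quot (S : C → Prop) : ClosedUnderQuotients (ExtClosQuot S) := by
  intro X Q p hp hX
  induction hX generalizing Q with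
  | zero X hX =>
      haveI := hp
      exact ExtClosure.zero Q (IsZero.of_epi_eq_zero p (hX.eq_zero_of_src p))
  | of X hX =>
      obtain ⟨X', q, hq, hS⟩ := hX
      haveI := hq; haveI := hp
      exact ExtClosure.of Q ⟨X', q ≫ p, inferInstance, hS⟩
  | ext f g hse hXc hYc ihX ihY =>
      haveI := hp
      obtain ⟨w, hS⟩ := hse
      set q := f ≫ p with hq
      have hX' : ExtClosQuot S (Abelian.image q) :=
        ihX (Abelian.factorThruImage q) inferInstance
      have wz : f ≫ (p ≫ cokernel.π q) = 0 := by
        rw [← Category.assoc, ← hq, cokernel.condition]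
      obtain ⟨u, hu⟩ := CokernelCofork.IsColimit.desc' hS.gIsCokernel (p ≫ cokernel.π q) wz
      haveI : Epi (p ≫ cokernel.π q) := epi_comp _ _
      haveI : Epi u := epi_of_epi_fac hu
      have hY' : ExtClosQuot S (cokernel q) := ihY u inferInstance
      have hSE : IsShortExactSeq (Abelian.image.ι q) (cokernel.π q) :=
        ⟨kernel.condition _, ShortComplex.ShortExact.mk'
          (ShortComplex.exact_of_f_is_kernel _ (kernelIsKernel _))
          inferInstance inferInstance⟩
      exact ExtClosure.ext _ _ hSE hX' hY'

structure IsTorsCls (P : C → Prop) : Prop where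
  zero : ∀ X : C, IsZero X → P X
  quot : ClosedUnderQuotients P
  ext : ClosedUnderExt P

lemma torsCls_extClosQuot (S : C → Prop) : IsTorsCls (ExtClosQuot S) :=
  ⟨fun X h => .zero X h, extClosQuot_quot S, fun _ _ _ f g h hX hY => .ext f g h hX hY⟩

lemma torsCls_true : IsTorsCls (fun _ : C => True) :=
  ⟨fun _ _ => trivial, fun _ _ _ _ _ => trivial, fun _ _ _ _ _ _ _ _ => trivial⟩


lemma isZero_bot_subobject (E : C) : IsZero ((⊥ : Subobject E) : C) :=
  IsZero.of_mono_eq_zero (⊥ : Subobject E).arrow Subobject.bot_arrow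

lemma exists_torsion_subobject {P : C → Prop} (hP : IsTorsCls P)
    (E : C) [IsNoetherianObject E] :
    ∃ m : Subobject E, P ((m : C)) ∧ (∀ A : Subobject E, P ((A : C)) → A ≤ m) ∧
      Perp P (cokernel m.arrow) := by
  obtain ⟨m, hmP, hmax⟩ : ∃ m : Subobject E, P ((m : C)) ∧
      ∀ A : Subobject E, P ((A : C)) → ¬ m < A := by
    obtain ⟨m, hm, hmin⟩ := (wellFounded_gt (α := Subobject E)).has_min
      {A : Subobject E | P ((A : C))} ⟨⊥, hP.zero _ (isZero_bot_subobject E)⟩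
    exact ⟨m, hm, fun A hA hlt => hmin A hA hlt⟩
  set π := cokernel.π m.arrow with hπ
  have hperp : Perp P (cokernel m.arrow) := by
    intro V hV h
    set ρ := cokernel.π h with hρ
    have hIepi : Epi (kernel.lift ρ h (cokernel.condition h)) :=
      inferInstanceAs (Epi (Abelian.factorThruImage h))
    have hI : P (kernel ρ) := hP.quot _ hIepi hV
    set ι := kernel.ι ρ with hι
    set k := kernel.ι (π ≫ ρ) with hk
    have hf'w : m.arrow ≫ π ≫ ρ = 0 := by
      rw [← Category.assoc, cokernel.condition, zero_comp]
    set f' := kernel.lift (π ≫ ρ) m.arrow hf'w with hf'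
    have hf'k : f' ≫ k = m.arrow := kernel.lift_ι _ _ _
    have huw : (k ≫ π) ≫ ρ = 0 := by rw [Category.assoc, kernel.condition]
    set u : kernel (π ≫ ρ) ⟶ kernel ρ := kernel.lift ρ (k ≫ π) huw with hu
    have huι : u ≫ ι = k ≫ π := kernel.lift_ι _ _ _
    have hcokex : (ShortComplex.mk m.arrow π (cokernel.condition m.arrow)).Exact :=
      ShortComplex.exact_of_g_is_cokernel _ (cokernelIsCokernel _)
    have hkerex : (ShortComplex.mk k (π ≫ ρ) (kernel.condition (π ≫ ρ))).Exact :=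
      ShortComplex.exact_of_f_is_kernel _ (kernelIsKernel _)
    haveI : Epi u := by
      apply epi_of_pseudo_surjective
      intro i
      obtain ⟨e', he'⟩ := pseudo_surjective_of_epi π (ι i)
      have he'0 : (π ≫ ρ) e' = 0 := by
        rw [Pseudoelement.comp_apply, he', ← Pseudoelement.comp_apply,
          kernel.condition, Pseudoelement.zero_apply]
      obtain ⟨x, hx⟩ := pseudo_exact_of_exact hkerex e' he'0
      have hx' : k x = e' := hx
      refine ⟨x, pseudo_injective_of_mono ι ?_⟩
      show ι (u x) = ι i
      rw [← Pseudoelement.comp_apply, huι, Pseudoelement.comp_apply, hx', he']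
    have hw0 : f' ≫ u = 0 := by
      rw [← cancel_mono ι, Category.assoc, huι, ← Category.assoc,
        hf'k, zero_comp, cokernel.condition]
    have hses : IsShortExactSeq f' u := by
      refine ⟨hw0, ShortComplex.ShortExact.mk' ?_ (mono_of_mono_fac hf'k) inferInstance⟩
      apply exact_of_pseudo_exact
      intro b hb
      have hb' : u b = 0 := hb
      have hπkb : π (k b) = 0 := by
        rw [← Pseudoelement.comp_apply, ← huι, Pseudoelement.comp_apply, hb', apply_zero]
      obtain ⟨a, ha⟩ := pseudo_exact_of_exact hcokex (k b) hπkb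
      have ha' : m.arrow a = k b := ha
      refine ⟨a, pseudo_injective_of_mono k ?_⟩
      show k (f' a) = k b
      rw [← Pseudoelement.comp_apply, hf'k, ha']
    have hPker : P (kernel (π ≫ ρ)) := hP.ext f' u hses hmP hI
    have hle : m ≤ Subobject.mk k := Subobject.le_mk_of_comm f' hf'k
    have hPmk : P ((Subobject.mk k : Subobject E) : C) :=
      hP.quot (Subobject.underlyingIso k).inv inferInstance hPker
    have hmeq : m = Subobject.mk k := (lt_or_eq_of_le hle).resolve_left (hmax _ hPmk)
    have hmkarrow : (Subobject.mk k).arrow ≫ π = 0 := by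
      rw [← hmeq]; exact cokernel.condition m.arrow
    have hkπ : k ≫ π = 0 := by
      rw [← Subobject.underlyingIso_arrow k, Category.assoc, hmkarrow, comp_zero]
    have hu0 : u = 0 := by
      rw [← cancel_mono ι, huι, hkπ, zero_comp]
    have hIzero : IsZero (kernel ρ) := IsZero.of_epi_eq_zero u hu0
    rw [← kernel.lift_ι ρ h (cokernel.condition h), hIzero.eq_zero_of_src (kernel.ι ρ), comp_zero]
  refine ⟨m, hmP, ?_, hperp⟩
  intro A hA
  obtain ⟨l, hl⟩ := KernelFork.IsLimit.lift'
    (Abelian.monoIsKernelOfCokernel _ (cokernelIsCokernel m.arrow)) A.arrow (hperp _ hA _)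
  exact Subobject.le_of_comm l hl


lemma cokernel_ofLE_mono {E : C} {A B : Subobject E} (h : A ≤ B) :
    ∃ v : cokernel (Subobject.ofLE A B h) ⟶ cokernel A.arrow, Mono v := by
  have hw : Subobject.ofLE A B h ≫ B.arrow ≫ cokernel.π A.arrow = 0 := by
    rw [← Category.assoc, Subobject.ofLE_arrow, cokernel.condition]
  refine ⟨cokernel.desc _ (B.arrow ≫ cokernel.π A.arrow) hw, ?_⟩
  set v := cokernel.desc _ _ hw with hv
  have hfac : cokernel.π (Subobject.ofLE A B h) ≫ v = B.arrow ≫ cokernel.π A.arrow :=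
    cokernel.π_desc _ _ _
  have hex : (ShortComplex.mk A.arrow (cokernel.π A.arrow) (cokernel.condition _)).Exact :=
    ShortComplex.exact_of_g_is_cokernel _ (cokernelIsCokernel _)
  apply mono_of_zero_of_map_zero
  intro x hx
  obtain ⟨b, hb⟩ := pseudo_surjective_of_epi (cokernel.π (Subobject.ofLE A B h)) x
  have h1 : (cokernel.π A.arrow) (B.arrow b) = 0 := by
    rw [← Pseudoelement.comp_apply, ← hfac, Pseudoelement.comp_apply, hb, hx]
  obtain ⟨a, ha⟩ := pseudo_exact_of_exact hex _ h1
  have ha' : A.arrow a = B.arrow b := ha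
  have hab : (Subobject.ofLE A B h) a = b := by
    apply pseudo_injective_of_mono B.arrow
    show B.arrow ((Subobject.ofLE A B h) a) = B.arrow b
    rw [← Pseudoelement.comp_apply, Subobject.ofLE_arrow, ha']
  rw [← hb, ← hab, ← Pseudoelement.comp_apply, cokernel.condition, Pseudoelement.zero_apply]

lemma perp_cokernel_ofLE {P : C → Prop} {E : C} {A B : Subobject E} (h : A ≤ B)
    (hA : Perp P (cokernel A.arrow)) : Perp P (cokernel (Subobject.ofLE A B h)) := by
  obtain ⟨v, hv⟩ := cokernel_ofLE_mono h
  haveI := hv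
  exact perp_of_mono v hA

lemma perp_ofLE_congr {P : C → Prop} {E : C} {A A' B : Subobject E} (hAA : A = A')
    (h : A ≤ B) (h' : A' ≤ B) (hp : Perp P (cokernel (Subobject.ofLE A B h))) :
    Perp P (cokernel (Subobject.ofLE A' B h')) := by subst hAA; exact hp

lemma eq_torsion_of_filt {P : C → Prop} {E : C} {m A B : Subobject E}
    (hmP : P ((m : C))) (hgreat : ∀ X : Subobject E, P ((X : C)) → X ≤ m)
    (hAB : A ≤ B) (hA : P ((A : C)))
    (hq : Perp P (cokernel (Subobject.ofLE A B hAB))) (hmB : m ≤ B) : A = m := by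
  refine le_antisymm (hgreat A hA) ?_
  obtain ⟨l, hl⟩ := KernelFork.IsLimit.lift'
    (Abelian.monoIsKernelOfCokernel _ (cokernelIsCokernel (Subobject.ofLE A B hAB)))
    _ (hq _ hmP (Subobject.ofLE m B hmB ≫ cokernel.π (Subobject.ofLE A B hAB)))
  have hl' : l ≫ Subobject.ofLE A B hAB = Subobject.ofLE m B hmB := hl
  refine Subobject.le_of_comm l ?_
  rw [← Subobject.ofLE_arrow hAB, ← Category.assoc, hl', Subobject.ofLE_arrow]


variable [HasExt.{w} C]

/-- `B_i := {E ∈ 𝒵 : Ext^i(T, E) = 0}`. -/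
def BClass (T : C) (i : ℕ) : C → Prop := fun E => Subsingleton (Ext T E i)

/-- `𝒯_i := [B_i ∩ B_{i+1} ∩ ⋯ ∩ B_n]` for `1 ≤ i ≤ n`, and `𝒯_{n+1} := 𝒵`. -/
def TClass (T : C) (n i : ℕ) : C → Prop := fun E =>
  if i ≤ n then ExtClosQuot (fun F => ∀ j : ℕ, i ≤ j → j ≤ n → BClass T j F) E else True

/-- `ℱ_i := 𝒯_i°` for `1 ≤ i ≤ n+1`, and `ℱ_0 := 𝒵`. -/
def FClass (T : C) (n i : ℕ) : C → Prop := fun E =>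
  if i = 0 then True else Perp (TClass T n i) E

/-- A chain of subobjects `0 = E_0 ⊆ E_1 ⊆ ⋯ ⊆ E_n ⊆ E_{n+1} = E` such that, for all
`1 ≤ i ≤ n+1`, `E_i ∈ 𝒯_i` and `E_i/E_{i-1} ∈ 𝒯_i ∩ ℱ_{i-1}`. -/
def IsJMSFiltration (T : C) (n : ℕ) (E : C) (c : Fin (n + 2) → Subobject E) : Prop :=
  Monotone c ∧ c 0 = ⊥ ∧ c (Fin.last (n + 1)) = ⊤ ∧
    ∀ i : Fin (n + 1),
      TClass T n (i.1 + 1) ((c i.succ : C)) ∧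
      ∃ h : c i.castSucc ≤ c i.succ,
        TClass T n (i.1 + 1) (cokernel (Subobject.ofLE (c i.castSucc) (c i.succ) h)) ∧
        FClass T n i.1 (cokernel (Subobject.ofLE (c i.castSucc) (c i.succ) h))

lemma tclass_eq_of_le (T : C) {n i : ℕ} (hi : i ≤ n) :
    TClass T n i = ExtClosQuot (fun F => ∀ j : ℕ, i ≤ j → j ≤ n → BClass T j F) :=
  funext fun _ => if_pos hi

lemma tclass_eq_of_gt (T : C) {n i : ℕ} (hi : ¬ i ≤ n) :
    TClass T n i = fun _ => True :=
  funext fun _ => if_neg hi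

lemma fclass_eq_of_ne (T : C) {n i : ℕ} (hi : ¬ i = 0) :
    FClass T n i = Perp (TClass T n i) :=
  funext fun _ => if_neg hi

lemma torsCls_TClass (T : C) (n i : ℕ) : IsTorsCls (TClass T n i) := by
  by_cases hi : i ≤ n
  · rw [tclass_eq_of_le T hi]
    exact torsCls_extClosQuot _
  · rw [tclass_eq_of_gt T hi]
    exact torsCls_true

lemma tclass_mono (T : C) (n : ℕ) {i j : ℕ} (hij : i ≤ j) (E : C)
    (hE : TClass T n i E) : TClass T n j E := by
  by_cases hj : j ≤ n
  · have hi : i ≤ n := le_trans hij hj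
    simp only [TClass, if_pos hj]
    simp only [TClass, if_pos hi] at hE
    exact extClosQuot_mono (fun X hX k hk1 hk2 => hX k (le_trans hij hk1) hk2) hE
  · rw [tclass_eq_of_gt T hj]
    trivial


/-- Let `𝒵` be a noetherian abelian category of homological dimension at most
`n` and `T` an object of `𝒵`.  Then every object `E` admits a unique filtration
`0 = E_0 ⊆ E_1 ⊆ ⋯ ⊆ E_n ⊆ E_{n+1} = E` with `E_i ∈ 𝒯_i` and
`E_i/E_{i-1} ∈ 𝒯_i ∩ ℱ_{i-1}` for `1 ≤ i ≤ n+1`; moreover each `𝒯_i ∩ ℱ_{i-1}` is closed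
under extensions, and for `i ≠ j` the only object in both `𝒯_i ∩ ℱ_{i-1}` and
`𝒯_j ∩ ℱ_{j-1}` is the zero object. -/
theorem jms_filtration_general
    (hNoeth : ∀ X : C, IsNoetherianObject X) (n : ℕ)
    (hdim : ∀ (X Y : C) (i : ℕ), n < i → Subsingleton (Ext X Y i)) (T : C) :
    (∀ E : C, ∃! c : Fin (n + 2) → Subobject E, IsJMSFiltration T n E c) ∧
    (∀ i : ℕ, 1 ≤ i → i ≤ n + 1 →
      ClosedUnderExt (fun E => TClass T n i E ∧ FClass T n (i - 1) E)) ∧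
    (∀ i j : ℕ, 1 ≤ i → i ≤ n + 1 → 1 ≤ j → j ≤ n + 1 → i ≠ j →
      ∀ E : C, (TClass T n i E ∧ FClass T n (i - 1) E) →
        (TClass T n j E ∧ FClass T n (j - 1) E) → IsZero E) := by
  have hTC : ∀ i : ℕ, IsTorsCls (TClass T n i) := torsCls_TClass T n
  choose tors htP htgreat htperp using
    fun (i : ℕ) (E : C) => @exists_torsion_subobject C _ _ _ (hTC i) E (hNoeth E)
  have tors_le : ∀ (E : C) {i j : ℕ}, i ≤ j → tors i E ≤ tors j E :=
    fun E i j hij => htgreat j E _ (tclass_mono T n hij _ (htP i E))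
  have tors_top : ∀ E : C, tors (n+1) E = ⊤ := by
    intro E
    refine le_antisymm le_top (htgreat (n+1) E ⊤ ?_)
    rw [tclass_eq_of_gt T (by omega)]
    trivial
  refine ⟨?_, ?_, ?_⟩
  · -- existence and uniqueness of the filtration
    intro E
    set d : Fin (n+2) → Subobject E := fun k => if k.1 = 0 then ⊥ else tors k.1 E with hd
    have hd0 : d 0 = ⊥ := by simp [hd]
    have hdsucc : ∀ i : Fin (n+1), d i.succ = tors (i.1+1) E := by
      intro i
      simp [hd]
    have hdne : ∀ i : Fin (n+2), i.1 ≠ 0 → d i = tors i.1 E := by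
      intro i hi
      simp only [hd, if_neg hi]
    have hmono : Monotone d := by
      intro a b hab
      have hab' : a.1 ≤ b.1 := hab
      by_cases ha : a.1 = 0
      · have : d a = ⊥ := by simp only [hd, if_pos ha]
        rw [this]
        exact bot_le
      · have hb : b.1 ≠ 0 := by omega
        rw [hdne a ha, hdne b hb]
        exact tors_le E hab'
    have hlast : d (Fin.last (n+1)) = ⊤ := by
      rw [hdne (Fin.last (n+1)) (by simp [Fin.last])]
      simpa using tors_top E
    have hfilt : IsJMSFiltration T n E d := by
      refine ⟨hmono, hd0, hlast, ?_⟩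
      intro i
      have hTi : TClass T n (i.1+1) ((d i.succ : C)) := by
        rw [hdsucc i]
        exact htP _ E
      refine ⟨hTi, hmono (Fin.castSucc_le_succ i), ?_, ?_⟩
      · exact (hTC (i.1+1)).quot (cokernel.π _) inferInstance hTi
      · by_cases hi0 : i.1 = 0
        · have : FClass T n i.1 = fun _ => True := funext fun _ => if_pos hi0
          rw [this]
          trivial
        · rw [fclass_eq_of_ne T hi0]
          have hcast : tors i.1 E = d i.castSucc := by
            rw [hdne i.castSucc (by simpa using hi0), Fin.coe_castSucc]
          have hle' : tors i.1 E ≤ d i.succ := by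
            rw [hcast]
            exact hmono (Fin.castSucc_le_succ i)
          exact perp_ofLE_congr hcast hle' _
            (perp_cokernel_ofLE hle' (htperp i.1 E))
    refine ⟨d, hfilt, ?_⟩
    intro c hc
    obtain ⟨hcm, hc0, hcl, hci⟩ := hc
    have hstep : ∀ (j : ℕ), j ≤ n+1 → ∀ i : Fin (n+2), i.1 = n+1-j → c i = d i := by
      intro j
      induction j with
      | zero =>
        intro _ i hi
        have : i = Fin.last (n+1) := Fin.ext (by simpa using hi)
        rw [this, hcl, hlast]
      | succ j ih =>
        intro hj i hi
        by_cases hk0 : i.1 = 0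
        · have : i = 0 := Fin.ext (by simpa using hk0)
          rw [this, hc0, hd0]
        · set k := i.1 with hkdef
          have hkn : k ≤ n := by omega
          have hk1 : 1 ≤ k := by omega
          set a : Fin (n+1) := ⟨k-1, by omega⟩ with hadef
          set b : Fin (n+1) := ⟨k, by omega⟩ with hbdef
          have hasucc : a.succ = i := Fin.ext (by simp [hadef]; omega)
          have hbcast : b.castSucc = i := Fin.ext (by simp [hbdef]; exact hkdef)
          have hbsucc : (b.succ : Fin (n+2)).1 = n+1-j := by
            simp [hbdef]
            omega
          have hcsucc : c b.succ = d b.succ := ih (by omega) b.succ hbsucc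
          have hdbsucc : d b.succ = tors (k+1) E := by
            rw [hdne b.succ (by simp [hbdef])]
            congr 1
          have hTa : TClass T n k ((c b.castSucc : C)) := by
            have h1 := (hci a).1
            rw [hasucc, ← hbcast] at h1
            have : a.1 + 1 = k := by simp [hadef]; omega
            rwa [this] at h1
          obtain ⟨hleb, hTq, hFq⟩ := (hci b).2
          have hFq' : Perp (TClass T n k) (cokernel (Subobject.ofLE (c b.castSucc) (c b.succ) hleb)) := by
            have : b.1 = k := rfl
            rw [fclass_eq_of_ne T (by omega : ¬ b.1 = 0)] at hFq
            exact hFq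
          have hmB : tors k E ≤ c b.succ := by
            rw [hcsucc, hdbsucc]
            exact tors_le E (by omega)
          have := eq_torsion_of_filt (htP k E) (htgreat k E) hleb hTa hFq' hmB
          rw [hbcast] at this
          rw [this, hdne i hk0]
    funext i
    exact hstep (n+1-i.1) (by omega) i (by omega)
  · -- closure under extensions
    intro i h1 h2 X E Y f g hse hX hY
    refine ⟨(hTC i).ext f g hse hX.1 hY.1, ?_⟩
    by_cases hi : i - 1 = 0
    · have : FClass T n (i-1) = fun _ => True := funext fun _ => if_pos hi
      rw [this]
      trivial
    · rw [fclass_eq_of_ne T hi]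
      have hX2 := hX.2
      have hY2 := hY.2
      rw [fclass_eq_of_ne T hi] at hX2 hY2
      exact perp_ext _ f g hse hX2 hY2
  · -- disjointness
    have haux : ∀ (i j : ℕ), i < j → 1 ≤ i → ∀ E : C,
        TClass T n i E → FClass T n (j-1) E → IsZero E := by
      intro i j hij hi E hT hF
      have hT' : TClass T n (j-1) E := tclass_mono T n (by omega) E hT
      rw [fclass_eq_of_ne T (by omega)] at hF
      rw [IsZero.iff_id_eq_zero]
      exact hF E hT' (𝟙 E)
    intro i j h1i h2i h1j h2j hne E hEi hEj
    rcases hne.lt_or_gt with h | h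
    · exact haux i j h h1i E hEi.1 hEj.2
    · exact haux j i h h1j E hEj.1 hEi.2

end TorsionPairs
end

section
/- Let 𝒟 be a triangulated category and let A and B be hearts of bounded t-structures on 𝒟. Suppose that every object X of B fits into a distinguished triangle Y → X → Z → Y[1] with Y ∈ A[1] and Z ∈ A. Then 𝒯 := A ∩ B and ℱ := A ∩ B[-1] form a torsion pair in the abelian category A, and B is the tilt of A with respect to (𝒯, ℱ): an object X of 𝒟 lies in B if and only if it fits into a distinguished triangle F[1] → X → T → F[2] with T ∈ 𝒯 and F ∈ ℱ. -/
open CategoryTheory Limits CategoryTheory.Pretriangulated CategoryTheory.Triangulated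

namespace TorsionPairs

variable {D : Type*} [Category D] [Preadditive D] [HasZeroObject D] [HasShift D ℤ]
  [∀ n : ℤ, (shiftFunctor D n).Additive] [Pretriangulated D] [IsTriangulated D]

/-- The heart of a t-structure: the objects that are both `≤ 0` and `≥ 0`. -/
def heart (t : TStructure D) : D → Prop := fun X => t.le 0 X ∧ t.ge 0 X

/-- A t-structure is bounded if every object lies in `D^{≥ a} ∩ D^{≤ b}` for some
`a, b : ℤ`. -/
def IsBoundedTStructure (t : TStructure D) : Prop :=
  ∀ X : D, ∃ a b : ℤ, t.ge a X ∧ t.le b X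

/-! ### Auxiliary t-structure lemmas -/

lemma le_shift_iff (t : TStructure D) (a n n' : ℤ) (h : a + n = n') (X : D) :
    t.le n (X⟦a⟧) ↔ t.le n' X := by
  rw [← t.shift_le a n n' h]; exact Iff.rfl

lemma ge_shift_iff (t : TStructure D) (a n n' : ℤ) (h : a + n = n') (X : D) :
    t.ge n (X⟦a⟧) ↔ t.ge n' X := by
  rw [← t.shift_ge a n n' h]; exact Iff.rfl

lemma zero_of (t : TStructure D) {X Y : D} (a b : ℤ) (hab : a < b)
    (hX : t.le a X) (hY : t.ge b Y) (f : X ⟶ Y) : f = 0 := by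
  have hX' : t.le 0 (X⟦a⟧) := t.le_shift a a 0 (by omega) X hX
  have hY' : t.ge (b - a) (Y⟦a⟧) := t.ge_shift b a (b - a) (by omega) Y hY
  have hY'' : t.ge 1 (Y⟦a⟧) := t.ge_antitone (show (1:ℤ) ≤ b - a by omega) _ hY'
  have h0 := t.zero' ((shiftFunctor D a).map f) hX' hY''
  exact (shiftFunctor D a).map_injective (by rw [h0, Functor.map_zero])

lemma le_of_orth (t : TStructure D) (n : ℤ) (X : D)
    (hX : ∀ (W : D), t.ge (n + 1) W → ∀ f : X ⟶ W, f = 0) : t.le n X := by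
  obtain ⟨A, C, hA, hC, f, g, h, mem⟩ := t.exists_triangle X n (n + 1) rfl
  have hg : g = 0 := hX C hC g
  obtain ⟨w, hw⟩ := Triangle.yoneda_exact₃ _ mem (𝟙 C)
    (by rw [show (Triangle.mk f g h).mor₂ = 0 from hg]; exact zero_comp)
  have hA' : t.le (n - 1) (A⟦(1:ℤ)⟧) := t.le_shift n 1 (n - 1) (by omega) A hA
  have hw0 : w = 0 := zero_of t (n - 1) (n + 1) (by omega) hA' hC w
  have hzc : IsZero C := by
    rw [IsZero.iff_id_eq_zero, hw, hw0, comp_zero]; rfl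
  have : IsIso f := (Triangle.isZero₃_iff_isIso₁ _ mem).1 hzc
  exact (t.le n).prop_of_iso (asIso f) hA

lemma ge_of_orth (t : TStructure D) (n : ℤ) (X : D)
    (hX : ∀ (W : D), t.le (n - 1) W → ∀ f : W ⟶ X, f = 0) : t.ge n X := by
  obtain ⟨A, C, hA, hC, f, g, h, mem⟩ := t.exists_triangle X (n - 1) n (by omega)
  have hf : f = 0 := hX A hA f
  obtain ⟨w, hw⟩ := Triangle.coyoneda_exact₂ _ (inv_rot_of_distTriang _ mem) (𝟙 A)
    (by rw [show (Triangle.mk f g h).invRotate.mor₂ = 0 from hf]; exact comp_zero)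
  have hC' : t.ge (n + 1) (C⟦(-1:ℤ)⟧) := t.ge_shift n (-1) (n + 1) (by omega) C hC
  have hw0 : w = 0 := zero_of t (n - 1) (n + 1) (by omega) hA hC' w
  have hzA : IsZero A := by
    rw [IsZero.iff_id_eq_zero, hw, hw0, zero_comp]; rfl
  have : IsIso g := (Triangle.isZero₁_iff_isIso₂ _ mem).1 hzA
  exact (t.ge n).prop_of_iso (asIso g).symm hC

lemma isZero_le (t : TStructure D) (n : ℤ) {X : D} (h : IsZero X) : t.le n X :=
  le_of_orth t n X (fun _ _ f => h.eq_of_src f 0)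

lemma isZero_ge (t : TStructure D) (n : ℤ) {X : D} (h : IsZero X) : t.ge n X :=
  ge_of_orth t n X (fun _ _ f => h.eq_of_tgt f 0)

lemma le_ext (t : TStructure D) {T : Triangle D} (hT : T ∈ distTriang D) (n : ℤ)
    (h₁ : t.le n T.obj₁) (h₃ : t.le n T.obj₃) : t.le n T.obj₂ := by
  apply le_of_orth t n
  intro W hW f
  obtain ⟨g, rfl⟩ := Triangle.yoneda_exact₂ _ hT f
    (by rw [zero_of t n (n + 1) (by omega) h₁ hW (T.mor₁ ≫ f)])
  rw [zero_of t n (n + 1) (by omega) h₃ hW g, comp_zero]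

lemma ge_ext (t : TStructure D) {T : Triangle D} (hT : T ∈ distTriang D) (n : ℤ)
    (h₁ : t.ge n T.obj₁) (h₃ : t.ge n T.obj₃) : t.ge n T.obj₂ := by
  apply ge_of_orth t n
  intro W hW f
  obtain ⟨g, rfl⟩ := Triangle.coyoneda_exact₂ _ hT f
    (by rw [zero_of t (n - 1) n (by omega) hW h₃ (f ≫ T.mor₂)])
  rw [zero_of t (n - 1) n (by omega) hW h₁ g, zero_comp]

section Two

variable (t₁ t₂ : TStructure D)

/-- `B ⊆ D^{[-1,0]}` for `t₁`. -/
lemma B_interval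
    (hAB : ∀ X : D, heart t₂ X →
      ∃ (Y Z : D) (f : Y ⟶ X) (g : X ⟶ Z) (h : Z ⟶ Y⟦(1 : ℤ)⟧),
        Triangle.mk f g h ∈ (distTriang D) ∧ heart t₁ (Y⟦(-1 : ℤ)⟧) ∧ heart t₁ Z)
    (X : D) (hX : heart t₂ X) : t₁.ge (-1) X ∧ t₁.le 0 X := by
  obtain ⟨Y, Z, f, g, h, mem, hY, hZ⟩ := hAB X hX
  have hYle : t₁.le (-1) Y := (le_shift_iff t₁ (-1) 0 (-1) (by omega) Y).1 hY.1
  have hYge : t₁.ge (-1) Y := (ge_shift_iff t₁ (-1) 0 (-1) (by omega) Y).1 hY.2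
  exact ⟨ge_ext t₁ mem (-1) hYge (t₁.ge_antitone (by omega) _ hZ.2),
    le_ext t₁ mem 0 (t₁.le_monotone (by omega) _ hYle) hZ.1⟩

lemma key
    (hAB : ∀ X : D, heart t₂ X →
      ∃ (Y Z : D) (f : Y ⟶ X) (g : X ⟶ Z) (h : Z ⟶ Y⟦(1 : ℤ)⟧),
        Triangle.mk f g h ∈ (distTriang D) ∧ heart t₁ (Y⟦(-1 : ℤ)⟧) ∧ heart t₁ Z) :
    ∀ (n : ℕ) (X : D) (a b : ℤ), b - a ≤ (n : ℤ) → t₂.ge a X → t₂.le b X →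
      t₁.ge (a - 1) X ∧ t₁.le b X := by
  intro n
  induction n with
  | zero =>
      intro X a b hn hGE hLE
      rcases lt_or_eq_of_le (show b ≤ a by omega) with hba | hba
      · have hz : IsZero X := by
          rw [IsZero.iff_id_eq_zero]
          exact zero_of t₂ b a hba hLE hGE (𝟙 X)
        exact ⟨isZero_ge t₁ _ hz, isZero_le t₁ _ hz⟩
      · subst hba
        have hh : heart t₂ (X⟦b⟧) :=
          ⟨t₂.le_shift b b 0 (by omega) X hLE, t₂.ge_shift b b 0 (by omega) X hGE⟩
        obtain ⟨h1, h2⟩ := B_interval t₁ t₂ hAB _ hh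
        exact ⟨(ge_shift_iff t₁ b (-1) (b - 1) (by omega) X).1 h1,
          (le_shift_iff t₁ b 0 b (by omega) X).1 h2⟩
  | succ n ih =>
      intro X a b hn hGE hLE
      by_cases hcase : b - a ≤ (n : ℤ)
      · exact ih X a b hcase hGE hLE
      · have hab : a < b := by omega
        obtain ⟨A, C, hA, hC, f, g, h, mem⟩ := t₂.exists_triangle X (b - 1) b (by omega)
        have hCle : t₂.le b C := by
          refine le_ext t₂ (rot_of_distTriang _ mem) b hLE ?_
          exact t₂.le_monotone (show b - 2 ≤ b by omega) _
            (t₂.le_shift (b - 1) 1 (b - 2) (by omega) A hA)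
        have hAge : t₂.ge a A := by
          refine ge_ext t₂ (inv_rot_of_distTriang _ mem) a ?_ hGE
          exact t₂.ge_antitone (show a ≤ b + 1 by omega) _
            (t₂.ge_shift b (-1) (b + 1) (by omega) C hC)
        obtain ⟨hA1, hA2⟩ := ih A a (b - 1) (by omega) hAge hA
        obtain ⟨hC1, hC2⟩ := ih C b b (by omega) hC hCle
        constructor
        · exact ge_ext t₁ mem (a - 1) hA1 (t₁.ge_antitone (show a - 1 ≤ b - 1 by omega) _ hC1)
        · exact le_ext t₁ mem b (t₁.le_monotone (show b - 1 ≤ b by omega) _ hA2) hC2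

end Two

/-- Bayer-Macrì-Toda: let `A`, `B` be hearts of bounded t-structures on a
triangulated category `𝒟` such that every `X ∈ B` fits into a distinguished triangle
`Y → X → Z → Y[1]` with `Y ∈ A[1]` and `Z ∈ A`.  Then `𝒯 := A ∩ B` and `ℱ := A ∩ B[-1]`
form a torsion pair in the abelian category `A` (short exact sequences in `A` being the
distinguished triangles of `𝒟` with all three vertices in `A`), and `B` is the tilt of `A`
at `(𝒯, ℱ)`: an object `X` lies in `B` iff it fits into a distinguished triangle
`F[1] → X → T → F[2]` with `T ∈ 𝒯` and `F ∈ ℱ`. -/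
theorem tilt_of_heart_of_bounded_tstructure
    (t₁ t₂ : TStructure D)
    (hb₁ : IsBoundedTStructure t₁) (hb₂ : IsBoundedTStructure t₂)
    (hAB : ∀ X : D, heart t₂ X →
      ∃ (Y Z : D) (f : Y ⟶ X) (g : X ⟶ Z) (h : Z ⟶ Y⟦(1 : ℤ)⟧),
        Triangle.mk f g h ∈ (distTriang D) ∧ heart t₁ (Y⟦(-1 : ℤ)⟧) ∧ heart t₁ Z) :
    -- `Hom(𝒯, ℱ) = 0`:
    (∀ T F : D, (heart t₁ T ∧ heart t₂ T) → (heart t₁ F ∧ heart t₂ (F⟦(1 : ℤ)⟧)) →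
      ∀ f : T ⟶ F, f = 0) ∧
    -- every object `E` of `A` sits in a short exact sequence `0 → T → E → F → 0` in `A`
    -- with `T ∈ 𝒯` and `F ∈ ℱ`:
    (∀ E : D, heart t₁ E →
      ∃ (T F : D) (f : T ⟶ E) (g : E ⟶ F) (h : F ⟶ T⟦(1 : ℤ)⟧),
        Triangle.mk f g h ∈ (distTriang D) ∧
        (heart t₁ T ∧ heart t₂ T) ∧ (heart t₁ F ∧ heart t₂ (F⟦(1 : ℤ)⟧))) ∧
    -- `B` is the corresponding tilt of `A`:
    (∀ X : D, heart t₂ X ↔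
      ∃ (T F : D) (f : F⟦(1 : ℤ)⟧ ⟶ X) (g : X ⟶ T) (h : T ⟶ (F⟦(1 : ℤ)⟧)⟦(1 : ℤ)⟧),
        Triangle.mk f g h ∈ (distTriang D) ∧
        (heart t₁ T ∧ heart t₂ T) ∧ (heart t₁ F ∧ heart t₂ (F⟦(1 : ℤ)⟧))) := by
  -- consequences of `key`
  have S2L : ∀ (b : ℤ) (X : D), t₂.le b X → t₁.le b X := by
    intro b X hX
    obtain ⟨a, b', hGE, _⟩ := hb₂ X
    rcases le_total a b with hab | hab
    · exact (key t₁ t₂ hAB (b - a).toNat X a b (by omega) hGE hX).2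
    · exact (key t₁ t₂ hAB 0 X a b (by omega) hGE hX).2
  have S2G : ∀ (a : ℤ) (X : D), t₂.ge a X → t₁.ge (a - 1) X := by
    intro a X hX
    obtain ⟨a', b, _, hLE⟩ := hb₂ X
    rcases le_total a b with hab | hab
    · exact (key t₁ t₂ hAB (b - a).toNat X a b (by omega) hX hLE).1
    · exact (key t₁ t₂ hAB 0 X a b (by omega) hX hLE).1
  have S3G : ∀ (n : ℤ) (X : D), t₁.ge n X → t₂.ge n X := by
    intro n X hX
    refine ge_of_orth t₂ n X (fun W hW f => ?_)
    exact zero_of t₁ (n - 1) n (by omega) (S2L (n - 1) W hW) hX f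
  have S3L : ∀ (n : ℤ) (X : D), t₁.le n X → t₂.le (n + 1) X := by
    intro n X hX
    refine le_of_orth t₂ (n + 1) X (fun W hW f => ?_)
    have : t₁.ge (n + 1) W :=
      t₁.ge_antitone (show n + 1 ≤ n + 1 + 1 - 1 by omega) _ (S2G (n + 1 + 1) W hW)
    exact zero_of t₁ n (n + 1) (by omega) hX this f
  refine ⟨?_, ?_, ?_⟩
  · -- Hom(𝒯, ℱ) = 0
    rintro T F ⟨_, hT₂⟩ ⟨_, hF₂⟩ f
    have hF : t₂.ge 1 F := (ge_shift_iff t₂ 1 0 1 (by omega) F).1 hF₂.2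
    exact zero_of t₂ 0 1 (by omega) hT₂.1 hF f
  · -- torsion pair triangles
    intro E hE
    obtain ⟨T', F', hT'le, hF'ge, f, g, h, mem⟩ := t₂.exists_triangle E 0 1 rfl
    have hE₂le : t₂.le 1 E := S3L 0 E hE.1
    have hE₂ge : t₂.ge 0 E := S3G 0 E hE.2
    have hT'ge : t₂.ge 0 T' := by
      refine ge_ext t₂ (inv_rot_of_distTriang _ mem) 0 ?_ hE₂ge
      exact t₂.ge_antitone (by omega) _ (t₂.ge_shift 1 (-1) 2 (by omega) F' hF'ge)
    have hF'le : t₂.le 1 F' := by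
      refine le_ext t₂ (rot_of_distTriang _ mem) 1 hE₂le ?_
      exact t₂.le_monotone (show (-1:ℤ) ≤ 1 by omega) _
        (t₂.le_shift 0 1 (-1) (by omega) T' hT'le)
    have hT'₁ : heart t₁ T' := by
      constructor
      · exact S2L 0 T' hT'le
      · refine ge_ext t₁ (inv_rot_of_distTriang _ mem) 0 ?_ hE.2
        have : t₁.ge 0 F' := by simpa using S2G 1 F' hF'ge
        exact t₁.ge_antitone (by omega) _ (t₁.ge_shift 0 (-1) 1 (by omega) F' this)
    have hF'₁ : heart t₁ F' := by
      constructor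
      · refine le_ext t₁ (rot_of_distTriang _ mem) 0 hE.1 ?_
        exact t₁.le_monotone (show (-1:ℤ) ≤ 0 by omega) _
          (t₁.le_shift 0 1 (-1) (by omega) T' hT'₁.1)
      · simpa using S2G 1 F' hF'ge
    have hF'sh : heart t₂ (F'⟦(1:ℤ)⟧) :=
      ⟨t₂.le_shift 1 1 0 (by omega) F' hF'le, t₂.ge_shift 1 1 0 (by omega) F' hF'ge⟩
    exact ⟨T', F', f, g, h, mem, ⟨hT'₁, ⟨hT'le, hT'ge⟩⟩, ⟨hF'₁, hF'sh⟩⟩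
  · -- tilt description of B
    intro X
    constructor
    · intro hX
      obtain ⟨Y, Z, f, g, h, mem, hY₁, hZ₁⟩ := hAB X hX
      -- memberships
      have hYle₂ : t₂.le 0 Y := by
        have h1 : t₂.le 1 (Y⟦(-1:ℤ)⟧) := S3L 0 _ hY₁.1
        exact (le_shift_iff t₂ (-1) 1 0 (by omega) Y).1 h1
      have hZ₂ : heart t₂ Z := by
        constructor
        · refine le_ext t₂ (rot_of_distTriang _ mem) 0 hX.1 ?_
          exact t₂.le_monotone (show (-1:ℤ) ≤ 0 by omega) _
            (t₂.le_shift 0 1 (-1) (by omega) Y hYle₂)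
        · exact S3G 0 Z hZ₁.2
      have hYge₂ : t₂.ge 0 Y := by
        refine ge_ext t₂ (inv_rot_of_distTriang _ mem) 0 ?_ hX.2
        exact t₂.ge_antitone (by omega) _ (t₂.ge_shift 0 (-1) 1 (by omega) Z hZ₂.2)
      -- the triangle with `F := Y⟦-1⟧`
      let e : (Y⟦(-1:ℤ)⟧)⟦(1:ℤ)⟧ ≅ Y := (shiftFunctorCompIsoId D (-1 : ℤ) 1 (by omega)).app Y
      refine ⟨Z, Y⟦(-1:ℤ)⟧, e.hom ≫ f, g, h ≫ (e.inv)⟦(1:ℤ)⟧', ?_, ⟨hZ₁, hZ₂⟩,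
        ⟨hY₁, ⟨(t₂.le 0).prop_of_iso e.symm hYle₂, (t₂.ge 0).prop_of_iso e.symm hYge₂⟩⟩⟩
      refine isomorphic_distinguished _ mem _ ?_
      refine Triangle.isoMk _ _ e (Iso.refl X) (Iso.refl Z) (by exact Category.comp_id _)
        (by exact (Category.comp_id g).trans (Category.id_comp g).symm) ?_
      dsimp
      change (h ≫ (e.inv)⟦(1:ℤ)⟧') ≫ e.hom⟦(1:ℤ)⟧' = 𝟙 Z ≫ h
      simp only [Category.id_comp, Category.assoc, ← Functor.map_comp, e.inv_hom_id]
      simp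
    · rintro ⟨T, F, f, g, h, mem, ⟨_, hT₂⟩, ⟨_, hFsh⟩⟩
      exact ⟨le_ext t₂ mem 0 hFsh.1 hT₂.1, ge_ext t₂ mem 0 hFsh.2 hT₂.2⟩

end TorsionPairs
end

section
/- Let 𝒵 be a noetherian abelian category of homological dimension at most 2 and let T be an object of 𝒵 with Ext^2(T,T) = 0. Set B_0 := {E ∈ 𝒵 : Hom(T,E) = 0}, B_2 := {E ∈ 𝒵 : Ext^2(T,E) = 0}, and X_1 := {E ∈ 𝒵 : Hom(T,E) = 0 and Ext^2(T,E) = 0}. Then B_2° = B_0 ∩ X_1°, and (B_2, B_0 ∩ X_1°) is a torsion pair in 𝒵. -/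
open CategoryTheory Limits Abelian

namespace TorsionPairs

universe w w' v u v' u'

variable {C : Type u} [Category.{v} C] [Abelian C]

variable [HasExt.{w} C]

lemma subsingleton_of_forall_eq_zero {X Y : C} {n : ℕ} (h : ∀ x : Ext X Y n, x = 0) :
    Subsingleton (Ext X Y n) :=
  ⟨fun a b => by rw [h a, h b]⟩

/-- `B₂` is closed under quotients (using `Ext³ = 0`). -/
lemma b2_quot (hdim : ∀ (X Y : C) (i : ℕ), 2 < i → Subsingleton (Ext X Y i)) (T : C)
    {E Q : C} (p : E ⟶ Q) [Epi p] (hE : Subsingleton (Ext T E 2)) :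
    Subsingleton (Ext T Q 2) := by
  have hS : (ShortComplex.mk (kernel.ι p) p (kernel.condition p)).ShortExact :=
    ShortComplex.ShortExact.mk' (ShortComplex.exact_kernel p) inferInstance inferInstance
  apply subsingleton_of_forall_eq_zero
  intro x
  obtain ⟨x₂, hx₂⟩ := Ext.covariant_sequence_exact₃ T hS x rfl
    ((hdim T (kernel p) 3 (by norm_num)).elim _ _)
  rw [← hx₂, hE.elim x₂ 0, Ext.zero_comp]

/-- `B₂` is closed under extensions. -/
lemma b2_ext (T : C) {X E Y : C} {f : X ⟶ E} {g : E ⟶ Y} (h : IsShortExactSeq f g)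
    (hX : Subsingleton (Ext T X 2)) (hY : Subsingleton (Ext T Y 2)) :
    Subsingleton (Ext T E 2) := by
  obtain ⟨w, hS⟩ := h
  apply subsingleton_of_forall_eq_zero
  intro x
  obtain ⟨x₁, hx₁⟩ := Ext.covariant_sequence_exact₂ T hS x (hY.elim _ _)
  rw [← hx₁, hX.elim x₁ 0, Ext.zero_comp]

lemma ext_subsingleton_of_isZero {Z : C} (hZ : IsZero Z) (X : C) (n : ℕ) :
    Subsingleton (Ext X Z n) := by
  apply subsingleton_of_forall_eq_zero
  intro x
  have h1 : (𝟙 Z : Z ⟶ Z) = 0 := hZ.eq_of_src _ _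
  calc x = x.comp (Ext.mk₀ (𝟙 Z)) (add_zero n) := (Ext.comp_mk₀_id x).symm
    _ = 0 := by rw [h1, Ext.mk₀_zero, Ext.comp_zero]

/-- A mono together with the projection to its cokernel is a short exact sequence. -/
lemma isShortExactSeq_of_mono {X E : C} (i : X ⟶ E) [Mono i] :
    IsShortExactSeq i (cokernel.π i) :=
  ⟨cokernel.condition i,
    ShortComplex.ShortExact.mk' (ShortComplex.exact_cokernel i) inferInstance inferInstance⟩

/-- The pullback of a subobject of the cokernel gives a short exact sequence
`0 ⟶ X ⟶ P ⟶ I ⟶ 0`. -/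
lemma pullback_shortExact {X E : C} (i : X ⟶ E) [Mono i] {I : C} (ι : I ⟶ cokernel i) [Mono ι] :
    IsShortExactSeq
      (pullback.lift i 0 (by simp) : X ⟶ pullback (cokernel.π i) ι)
      (pullback.snd (cokernel.π i) ι) := by
  set j : X ⟶ pullback (cokernel.π i) ι := pullback.lift i 0 (by simp) with hj
  have hjf : j ≫ pullback.fst _ _ = i := pullback.lift_fst _ _ _
  have hjs : j ≫ pullback.snd _ _ = 0 := pullback.lift_snd _ _ _
  have hmono : Mono j := by
    have : Mono (j ≫ pullback.fst (cokernel.π i) ι) := by rw [hjf]; infer_instance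
    exact mono_of_mono j (pullback.fst _ _)
  have hepi : Epi (pullback.snd (cokernel.π i) ι) := Abelian.epi_pullback_of_epi_f _ _
  refine ⟨hjs, ShortComplex.ShortExact.mk' ?_ hmono hepi⟩
  apply ShortComplex.exact_of_f_is_kernel
  refine KernelFork.IsLimit.ofι _ _
    (fun {W} k hk => Abelian.monoLift i (k ≫ pullback.fst _ _)
      (by rw [Category.assoc, pullback.condition, ← Category.assoc, hk, Limits.zero_comp]))
    ?_ ?_
  · intro W k hk
    apply pullback.hom_ext
    · rw [Category.assoc, hjf, Abelian.monoLift_comp]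
    · rw [Category.assoc, hjs, Limits.comp_zero, hk]
  · intro W k hk m hm
    have hm' : m ≫ j = k := hm
    rw [← cancel_mono i, Abelian.monoLift_comp, ← hm', Category.assoc, hjf]

/-- Let `𝒵` be a noetherian abelian category of homological dimension at most
2 and let `T` be an object with `Ext²(T,T) = 0`.  Set `B₀ = {E : Hom(T,E) = 0}`,
`B₂ = {E : Ext²(T,E) = 0}` and `X₁ = B₀ ∩ B₂`.  Then `B₂° = B₀ ∩ X₁°` and
`(B₂, B₀ ∩ X₁°)` is a torsion pair in `𝒵`. -/
theorem perp_B2_eq_and_isTorsionPair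
    (hNoeth : ∀ X : C, IsNoetherianObject X)
    (hdim : ∀ (X Y : C) (i : ℕ), 2 < i → Subsingleton (Ext X Y i))
    (T : C) (hT : Subsingleton (Ext T T 2)) :
    (∀ E : C, Perp (fun F => Subsingleton (Ext T F 2)) E ↔
      ((∀ f : T ⟶ E, f = 0) ∧
        Perp (fun F => (∀ f : T ⟶ F, f = 0) ∧ Subsingleton (Ext T F 2)) E)) ∧
    IsTorsionPair (fun E => Subsingleton (Ext T E 2))
      (fun E => (∀ f : T ⟶ E, f = 0) ∧
        Perp (fun F => (∀ f : T ⟶ F, f = 0) ∧ Subsingleton (Ext T F 2)) E) := by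
  have perpIff : ∀ E : C, Perp (fun F => Subsingleton (Ext T F 2)) E ↔
      ((∀ f : T ⟶ E, f = 0) ∧
        Perp (fun F => (∀ f : T ⟶ F, f = 0) ∧ Subsingleton (Ext T F 2)) E) := by
    intro E
    constructor
    · intro h
      exact ⟨fun f => h T hT f, fun V hV f => h V hV.2 f⟩
    · rintro ⟨h0, h1⟩ V hV f
      have hI2 : Subsingleton (Ext T (Limits.image f) 2) := b2_quot hdim T (Limits.factorThruImage f) hV
      have hI0 : ∀ g : T ⟶ Limits.image f, g = 0 := by
        intro g
        have hg : g ≫ Limits.image.ι f = 0 := h0 _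
        rw [← cancel_mono (Limits.image.ι f), hg, Limits.zero_comp]
      have hι : Limits.image.ι f = 0 := h1 (Limits.image f) ⟨hI0, hI2⟩ (Limits.image.ι f)
      rw [← Limits.image.fac f, hι, Limits.comp_zero]
  refine ⟨perpIff, ?_, ?_⟩
  · intro X Y hX hY f
    exact (perpIff Y).2 hY X hX f
  · intro E
    haveI := hNoeth E
    obtain ⟨X, hXS, hmax⟩ := (@wellFounded_gt (Subobject E) _ _).has_min
      {P : Subobject E | Subsingleton (Ext T ((P : Subobject E) : C) 2)}
      ⟨⊥, ext_subsingleton_of_isZero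
        (IsZero.of_iso (isZero_zero C) Subobject.botCoeIsoZero) T 2⟩
    refine ⟨(X : C), cokernel X.arrow, X.arrow, cokernel.π X.arrow, hXS, ?_,
      isShortExactSeq_of_mono X.arrow⟩
    apply (perpIff (cokernel X.arrow)).1
    intro V hV f
    have hI : Subsingleton (Ext T (Limits.image f) 2) := b2_quot hdim T (Limits.factorThruImage f) hV
    have hSES := pullback_shortExact X.arrow (Limits.image.ι f)
    have hPB2 : Subsingleton (Ext T (pullback (cokernel.π X.arrow) (Limits.image.ι f)) 2) :=
      b2_ext T hSES hXS hI
    have hle : X ≤ Subobject.mk (pullback.fst (cokernel.π X.arrow) (Limits.image.ι f)) :=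
      Subobject.le_mk_of_comm (pullback.lift X.arrow 0 (by simp)) (pullback.lift_fst _ _ _)
    have hmem : Subobject.mk (pullback.fst (cokernel.π X.arrow) (Limits.image.ι f)) ∈
        {P : Subobject E | Subsingleton (Ext T ((P : Subobject E) : C) 2)} :=
      b2_quot hdim T (Subobject.underlyingIso
        (pullback.fst (cokernel.π X.arrow) (Limits.image.ι f))).inv hPB2
    have hnlt : ¬ X < Subobject.mk (pullback.fst (cokernel.π X.arrow) (Limits.image.ι f)) :=
      hmax _ hmem
    have hge : Subobject.mk (pullback.fst (cokernel.π X.arrow) (Limits.image.ι f)) ≤ X :=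
      le_of_eq (hle.lt_or_eq.resolve_left hnlt).symm
    set k : (pullback (cokernel.π X.arrow) (Limits.image.ι f) : C) ⟶ (X : C) :=
      Subobject.ofMkLE _ X hge with hkdef
    have hk : k ≫ X.arrow = pullback.fst (cokernel.π X.arrow) (Limits.image.ι f) :=
      Subobject.ofMkLE_arrow hge
    have hkj : k ≫ pullback.lift X.arrow 0 (by simp) =
        𝟙 (pullback (cokernel.π X.arrow) (Limits.image.ι f)) := by
      rw [← cancel_mono (pullback.fst (cokernel.π X.arrow) (Limits.image.ι f)),
        Category.assoc, pullback.lift_fst, hk, Category.id_comp]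
    have hsnd : pullback.snd (cokernel.π X.arrow) (Limits.image.ι f) = 0 := by
      rw [← Category.id_comp (pullback.snd (cokernel.π X.arrow) (Limits.image.ι f)), ← hkj,
        Category.assoc, pullback.lift_snd, Limits.comp_zero]
    have hepi : Epi (pullback.snd (cokernel.π X.arrow) (Limits.image.ι f)) :=
      Abelian.epi_pullback_of_epi_f _ _
    have hIzero : IsZero (Limits.image f) := IsZero.of_epi_eq_zero _ hsnd
    have hι : Limits.image.ι f = 0 := hIzero.eq_of_src _ _
    rw [← Limits.image.fac f, hι, Limits.comp_zero]

end TorsionPairs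
end

section
/- Let 𝒵 be a noetherian abelian category of homological dimension at most n and let T be an object of 𝒵. Set B_n := {E ∈ 𝒵 : Ext^n(T,E) = 0}. Then (B_n, B_n°) is a torsion pair in 𝒵. -/
open CategoryTheory Limits Abelian

namespace TorsionPairs

universe w w' v u v' u'

variable {C : Type u} [Category.{v} C] [Abelian C]

variable [HasExt.{w} C]

section Auxiliary

variable (T : C) (n : ℕ)

/-- The class `B_n` is invariant under isomorphism. -/
lemma subsingleton_ext_of_iso {X Y : C} (e : X ≅ Y) (hX : Subsingleton (Ext T X n)) :
    Subsingleton (Ext T Y n) := by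
  have key : ∀ x : Ext T Y n,
      (x.comp (Ext.mk₀ e.inv) (add_zero n)).comp (Ext.mk₀ e.hom) (add_zero n) = x := by
    intro x
    rw [Ext.comp_assoc_of_third_deg_zero, Ext.mk₀_comp_mk₀, e.inv_hom_id, Ext.comp_mk₀_id]
  constructor
  intro x y
  rw [← key x, ← key y, Subsingleton.elim (x.comp (Ext.mk₀ e.inv) (add_zero n))
    (y.comp (Ext.mk₀ e.inv) (add_zero n))]

/-- Zero objects belong to `B_n`. -/
lemma subsingleton_ext_of_isZero {Z : C} (hZ : IsZero Z) : Subsingleton (Ext T Z n) := by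
  have key : ∀ x : Ext T Z n, x = 0 := by
    intro x
    rw [← Ext.comp_mk₀_id x, hZ.eq_of_src (𝟙 Z) 0, Ext.mk₀_zero, Ext.comp_zero]
  constructor
  intro x y
  rw [key x, key y]

/-- `B_n` is closed under quotients, using `Ext^{n+1}(T, ker) = 0`. -/
lemma subsingleton_ext_of_shortExact_quot {S : ShortComplex C} (hS : S.ShortExact)
    (hker : Subsingleton (Ext T S.X₁ (n + 1))) (h2 : Subsingleton (Ext T S.X₂ n)) :
    Subsingleton (Ext T S.X₃ n) := by
  have key : ∀ x : Ext T S.X₃ n, x = 0 := by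
    intro x
    obtain ⟨x₂, hx₂⟩ := Ext.covariant_sequence_exact₃ T hS x rfl (Subsingleton.elim _ _)
    rw [← hx₂, Subsingleton.elim x₂ 0, Ext.zero_comp]
  constructor
  intro x y
  rw [key x, key y]

/-- `B_n` is closed under extensions. -/
lemma subsingleton_ext_of_shortExact_ext {S : ShortComplex C} (hS : S.ShortExact)
    (h1 : Subsingleton (Ext T S.X₁ n)) (h3 : Subsingleton (Ext T S.X₃ n)) :
    Subsingleton (Ext T S.X₂ n) := by
  have key : ∀ x : Ext T S.X₂ n, x = 0 := by
    intro x
    obtain ⟨x₁, hx₁⟩ := Ext.covariant_sequence_exact₂ T hS x (Subsingleton.elim _ _)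
    rw [← hx₁, Subsingleton.elim x₁ 0, Ext.zero_comp]
  constructor
  intro x y
  rw [key x, key y]

end Auxiliary

/-- Let `𝒵` be a noetherian abelian category of homological dimension at most
`n` and `T` an object of `𝒵`.  With `B_n = {E : Ext^n(T,E) = 0}`, the pair `(B_n, B_n°)`
is a torsion pair in `𝒵`. -/
theorem isTorsionPair_Bn
    (hNoeth : ∀ X : C, IsNoetherianObject X) (n : ℕ)
    (hdim : ∀ (X Y : C) (i : ℕ), n < i → Subsingleton (Ext X Y i)) (T : C) :
    IsTorsionPair (fun E => Subsingleton (Ext T E n))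
      (Perp (fun E => Subsingleton (Ext T E n))) := by
  constructor
  · intro X Y hX hY f
    exact hY X hX f
  · intro E
    -- choose a maximal subobject of `E` lying in `B_n`
    have : IsNoetherianObject E := hNoeth E
    obtain ⟨m, hm, hmax⟩ := (wellFounded_gt (α := Subobject E)).has_min
      {S : Subobject E | Subsingleton (Ext T (S : C) n)}
      ⟨⊥, subsingleton_ext_of_isZero T n ((isZero_zero C).of_iso Subobject.botCoeIsoZero)⟩
    set g : E ⟶ cokernel m.arrow := cokernel.π m.arrow with hg
    refine ⟨(m : C), cokernel m.arrow, m.arrow, g, hm, ?_, cokernel.condition m.arrow,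
      { exact := ShortComplex.exact_of_g_is_cokernel _ (cokernelIsCokernel m.arrow),
        mono_f := inferInstance, epi_g := inferInstance }⟩
    -- it remains to prove that the quotient is in the perpendicular class
    intro V hV f
    -- the image of `f` lies in `B_n`
    have hSV : (ShortComplex.mk (kernel.ι (factorThruImageSubobject f))
        (factorThruImageSubobject f) (kernel.condition _)).ShortExact :=
      { exact := ShortComplex.exact_of_f_is_kernel _ (kernelIsKernel _),
        mono_f := inferInstance, epi_g := inferInstance }
    have hI : Subsingleton (Ext T ((imageSubobject f : Subobject (cokernel m.arrow)) : C) n) :=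
      subsingleton_ext_of_shortExact_quot T n hSV (hdim _ _ _ (by omega)) hV
    -- the preimage `N` of the image of `f` in `E`
    set I : Subobject (cokernel m.arrow) := imageSubobject f with hI'
    set N : C := pullback g I.arrow with hN
    set q : N ⟶ (I : C) := pullback.snd g I.arrow with hq
    have hu0 : m.arrow ≫ g = (0 : (m : C) ⟶ (I : C)) ≫ I.arrow := by
      simp [hg]
    set u : (m : C) ⟶ N := pullback.lift m.arrow 0 hu0 with hu
    have hufst : u ≫ pullback.fst g I.arrow = m.arrow := pullback.lift_fst _ _ _
    have huq : u ≫ q = 0 := pullback.lift_snd _ _ _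
    have hmono_u : Mono u := by
      have := hufst
      exact mono_of_mono_fac hufst
    -- `0 ⟶ m ⟶ N ⟶ I ⟶ 0` is a short exact sequence
    have hcomp0 : ∀ {W : C} (t : W ⟶ N), t ≫ q = 0 →
        (t ≫ pullback.fst g I.arrow) ≫ cokernel.π m.arrow = 0 := by
      intro W t ht
      rw [← hg, Category.assoc, pullback.condition, ← Category.assoc, ht, zero_comp]
    have hlim : IsLimit (KernelFork.ofι u huq) := by
      refine KernelFork.IsLimit.ofι u huq
        (fun {W} t ht => Abelian.monoLift m.arrow (t ≫ pullback.fst g I.arrow) (hcomp0 t ht))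
        (fun {W} t ht => ?_) (fun {W} t ht l hl => ?_)
      · apply pullback.hom_ext
        · rw [Category.assoc, hufst]
          exact Abelian.monoLift_comp m.arrow _ (hcomp0 t ht)
        · rw [Category.assoc, show u ≫ pullback.snd g I.arrow = 0 from huq, comp_zero]
          exact ht.symm
      · have := hmono_u
        rw [← cancel_mono u, hl]
        apply pullback.hom_ext
        · rw [Category.assoc, hufst]
          exact (Abelian.monoLift_comp m.arrow _ (hcomp0 t ht)).symm
        · rw [Category.assoc, show u ≫ pullback.snd g I.arrow = 0 from huq, comp_zero]
          exact ht
    have hSN : (ShortComplex.mk u q huq).ShortExact :=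
      { exact := ShortComplex.exact_of_f_is_kernel _ hlim,
        mono_f := hmono_u, epi_g := inferInstance }
    have hPN : Subsingleton (Ext T N n) :=
      subsingleton_ext_of_shortExact_ext T n hSN hm hI
    -- `N` is a subobject of `E` containing `m`, and it lies in `B_n`, hence `N = m`
    set N' : Subobject E := Subobject.mk (pullback.fst g I.arrow) with hN'
    have hle : m ≤ N' := Subobject.le_mk_of_comm u hufst
    have hPN' : Subsingleton (Ext T (N' : C) n) :=
      subsingleton_ext_of_iso T n (Subobject.underlyingIso (pullback.fst g I.arrow)).symm hPN
    have heq : m = N' := (lt_or_eq_of_le hle).resolve_left (hmax N' hPN')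
    -- therefore the image of `f` is zero, so `f = 0`
    have harr : (Subobject.mk (pullback.fst g I.arrow)).arrow ≫ g = 0 := by
      rw [← Subobject.ofLE_arrow (le_of_eq heq.symm), Category.assoc,
        show m.arrow ≫ g = 0 from cokernel.condition m.arrow, comp_zero]
    have hfst : pullback.fst g I.arrow ≫ g = 0 := by
      rw [← Subobject.underlyingIso_arrow (pullback.fst g I.arrow), Category.assoc,
        harr, comp_zero]
    have hsnd : q ≫ I.arrow = 0 := by
      rw [hq, ← pullback.condition, hfst]
    have hIarrow : I.arrow = 0 := zero_of_epi_comp q hsnd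
    rw [← imageSubobject_arrow_comp f]
    rw [show (imageSubobject f).arrow = I.arrow from rfl, hIarrow, comp_zero]

end TorsionPairs
end

section
/- Let 𝒵 be a noetherian abelian category and S any full subcategory of 𝒵. Then ([S], [S]°) is a torsion pair in 𝒵. -/
open CategoryTheory Limits Abelian

namespace TorsionPairs

universe w w' v u v' u'

variable {C : Type u} [Category.{v} C] [Abelian C]

/-! ### Auxiliary lemmas -/

open ZeroObject

/-- If a morphism `p : X ⟶ Q` is an epi and `X` is zero, then `Q` is zero. -/
lemma isZero_of_epi_of_isZero {X Q : C} (p : X ⟶ Q) (hp : Epi p) (hX : IsZero X) : IsZero Q := by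
  rw [IsZero.iff_id_eq_zero]
  have := hp
  exact (cancel_epi p).1 (hX.eq_of_src _ _)

/-- A mono together with its cokernel projection forms a short exact sequence. -/
lemma isShortExactSeq_cokernel {X Y : C} (f : X ⟶ Y) [Mono f] :
    IsShortExactSeq f (cokernel.π f) := by
  refine ⟨cokernel.condition f, ⟨?_⟩⟩
  exact ShortComplex.exact_of_g_is_cokernel _ (cokernelIsCokernel f)

/-- A kernel inclusion which is a kernel of an epi `g` gives a short exact sequence. -/
lemma isShortExactSeq_of_isLimit {X Y Z : C} (f : X ⟶ Y) (g : Y ⟶ Z) [Mono f] [Epi g]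
    (w : f ≫ g = 0) (h : IsLimit (KernelFork.ofι f w)) : IsShortExactSeq f g :=
  ⟨w, ⟨ShortComplex.exact_of_f_is_kernel _ h⟩⟩

/-- Extension closures are closed under isomorphisms. -/
lemma ExtClosure.of_iso {P : C → Prop} {X Y : C} (e : X ≅ Y) (hX : ExtClosure P X) :
    ExtClosure P Y := by
  have hepi : Epi (0 : Y ⟶ (0 : C)) := ⟨fun a b _ => (isZero_zero C).eq_of_src a b⟩
  have w : e.hom ≫ (0 : Y ⟶ (0 : C)) = 0 := comp_zero
  have hlim : IsLimit (KernelFork.ofι e.hom w) := by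
    refine KernelFork.IsLimit.ofι _ _ (fun {W'} g' _ => g' ≫ e.inv) (fun g' _ => by simp)
      (fun g' eq' m hm => ?_)
    rw [← hm, Category.assoc, Iso.hom_inv_id, Category.comp_id]
  exact ExtClosure.ext e.hom (0 : Y ⟶ (0 : C))
    (isShortExactSeq_of_isLimit e.hom _ w hlim) hX (ExtClosure.zero _ (isZero_zero C))

/-- The extension closure of a quotient-closed class is quotient-closed. -/
lemma closedUnderQuotients_extClosure {P : C → Prop} (hP : ClosedUnderQuotients P) :
    ClosedUnderQuotients (ExtClosure P) := by
  intro X Q p hp hX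
  induction hX generalizing Q with
  | zero Z hZ => exact ExtClosure.zero _ (isZero_of_epi_of_isZero p hp hZ)
  | of Z hZ => exact ExtClosure.of _ (hP p hp hZ)
  | ext f g hses hXmem hYmem ihX ihY =>
    rename_i X₁ E₁ Y₁
    have hmono : Mono f := hses.2.mono_f
    have hepi : Epi g := hses.2.epi_g
    have := hp
    -- the image of `f ≫ p` in `Q`
    set X' := Abelian.image (f ≫ p) with hX'
    set e₁ : X₁ ⟶ X' := Abelian.factorThruImage (f ≫ p) with he₁
    set m₁ : X' ⟶ Q := Abelian.image.ι (f ≫ p) with hm₁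
    have hfac : e₁ ≫ m₁ = f ≫ p := Abelian.image.fac (f ≫ p)
    set Y' := cokernel m₁ with hY'
    set π : Q ⟶ Y' := cokernel.π m₁ with hπ
    have hses' : IsShortExactSeq m₁ π := isShortExactSeq_cokernel m₁
    -- `Y'` is a quotient of `Y₁`
    have hw : f ≫ (p ≫ π) = 0 := by
      rw [← Category.assoc, ← hfac, Category.assoc, cokernel.condition, comp_zero]
    have hco : IsColimit (CokernelCofork.ofπ _ (ShortComplex.mk f g hses.1).zero) :=
      hses.2.exact.gIsCokernel
    set q : Y₁ ⟶ Y' := hco.desc (CokernelCofork.ofπ (p ≫ π) hw) with hq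
    have hgq : g ≫ q = p ≫ π := Cofork.IsColimit.π_desc hco
    have hqepi : Epi q := by
      have : Epi (g ≫ q) := by rw [hgq]; exact epi_comp p π
      exact epi_of_epi g q
    exact ExtClosure.ext m₁ π hses' (ihX e₁ inferInstance) (ihY q hqepi)

/-- If `𝒵` is a noetherian abelian category and `S` is any full subcategory,
then `([S], [S]°)` is a torsion pair in `𝒵`. -/
theorem isTorsionPair_extClosQuot
    (hNoeth : ∀ X : C, IsNoetherianObject X) (S : C → Prop) :
    IsTorsionPair (ExtClosQuot S) (Perp (ExtClosQuot S)) := by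
  set P := ExtClosQuot S with hPdef
  have hQuotS : ClosedUnderQuotients (QuotClass S) := by
    rintro X Q p hp ⟨E', p', hp', hE'⟩
    exact ⟨E', p' ≫ p, @epi_comp _ _ _ _ _ _ hp' _ hp, hE'⟩
  have hPquot : ClosedUnderQuotients P := closedUnderQuotients_extClosure hQuotS
  constructor
  · intro X Y hX hY f
    exact hY X hX f
  · intro E
    -- the set of subobjects of `E` lying in `P`
    have := hNoeth E
    obtain ⟨T, hTmem, hTmax⟩ := (wellFounded_gt (α := Subobject E)).has_min
      {s : Subobject E | P (s : C)}
      ⟨⊥, ExtClosure.zero _ ((isZero_zero C).of_iso Subobject.botCoeIsoZero)⟩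
    refine ⟨(T : C), cokernel T.arrow, T.arrow, cokernel.π T.arrow, hTmem, ?_,
      isShortExactSeq_cokernel T.arrow⟩
    -- show the quotient is in the perpendicular class
    intro V hV h
    by_contra hne
    set W := Abelian.image h with hW
    set e : V ⟶ W := Abelian.factorThruImage h with he
    set m : W ⟶ cokernel T.arrow := Abelian.image.ι h with hm
    have hfac : e ≫ m = h := Abelian.image.fac h
    have hPW : P W := hPquot e inferInstance hV
    -- pull back `W` along the projection
    set g : E ⟶ cokernel T.arrow := cokernel.π T.arrow with hg
    set T' := pullback m g with hT'
    set fst : T' ⟶ W := pullback.fst m g with hfst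
    set snd : T' ⟶ E := pullback.snd m g with hsnd
    have hfstepi : Epi fst := Abelian.epi_pullback_of_epi_g m g
    have hsndmono : Mono snd := pullback.snd_of_mono
    have hk0 : (0 : (T : C) ⟶ W) ≫ m = T.arrow ≫ g := by
      rw [zero_comp, hg, cokernel.condition]
    set k : (T : C) ⟶ T' := pullback.lift 0 T.arrow hk0 with hk
    have hkfst : k ≫ fst = 0 := pullback.lift_fst _ _ _
    have hksnd : k ≫ snd = T.arrow := pullback.lift_snd _ _ _
    have hkmono : Mono k := by
      have : Mono (k ≫ snd) := by rw [hksnd]; infer_instance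
      exact mono_of_mono k snd
    -- `T.arrow` is the kernel of `g`
    have hker : IsLimit (KernelFork.ofι T.arrow
        (CokernelCofork.condition (CokernelCofork.ofπ _ (cokernel.condition T.arrow)))) :=
      Abelian.monoIsKernelOfCokernel _ (cokernelIsCokernel T.arrow)
    -- `k` is the kernel of `fst`
    have hklim : IsLimit (KernelFork.ofι k hkfst) := by
      have := hkmono; have := hsndmono
      refine KernelFork.IsLimit.ofι' k hkfst (fun {Z} t ht => ?_)
      have hw : (t ≫ snd) ≫ cokernel.π T.arrow = 0 := by
        rw [hfst] at ht
        show (t ≫ pullback.snd m g) ≫ g = 0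
        rw [Category.assoc, ← pullback.condition, ← Category.assoc, ht, zero_comp]
      refine ⟨hker.lift (KernelFork.ofι (t ≫ snd) hw), ?_⟩
      have hl : hker.lift (KernelFork.ofι (t ≫ snd) hw) ≫ T.arrow = t ≫ snd :=
        Fork.IsLimit.lift_ι hker
      rw [← cancel_mono snd, Category.assoc, hksnd, hl]
    have hses : IsShortExactSeq k fst := by
      have := hkmono; have := hfstepi
      exact isShortExactSeq_of_isLimit k fst hkfst hklim
    have hPT' : P T' := ExtClosure.ext k fst hses hTmem hPW
    -- the subobject given by `snd`
    have hmem : (Subobject.mk snd : Subobject E) ∈ {s : Subobject E | P (s : C)} :=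
      ExtClosure.of_iso (Subobject.underlyingIso snd).symm hPT'
    have hle : T ≤ Subobject.mk snd := Subobject.le_mk_of_comm k hksnd
    have hnotgt := hTmax _ hmem
    have hle' : Subobject.mk snd ≤ T := by
      by_contra hc
      exact hnotgt (lt_of_le_not_ge hle hc)
    -- then `snd` factors through `T`, so `snd ≫ g = 0`
    have hsndg : snd ≫ g = 0 := by
      have harrow : Subobject.ofLE _ _ hle' ≫ T.arrow = (Subobject.mk snd).arrow :=
        Subobject.ofLE_arrow hle'
      have hsnd' : (Subobject.underlyingIso snd).inv ≫ (Subobject.mk snd).arrow = snd :=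
        Subobject.underlyingIso_arrow snd
      have h1 : (Subobject.mk snd).arrow ≫ cokernel.π T.arrow = 0 := by
        rw [← harrow, Category.assoc, cokernel.condition, comp_zero]
      show snd ≫ cokernel.π T.arrow = 0
      rw [← hsnd', Category.assoc, h1, comp_zero]
    have hfstm : fst ≫ m = 0 := by
      rw [hfst, pullback.condition, ← hsnd, hsndg]
    have hfst0 : fst = 0 := by
      have : Mono m := inferInstance
      rw [← cancel_mono m, hfstm, zero_comp]
    have hWzero : IsZero W := by
      rw [IsZero.iff_id_eq_zero]
      have := hfstepi
      exact (cancel_epi fst).1 (by rw [comp_zero, hfst0, zero_comp])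
    exact hne (by rw [← hfac, hWzero.eq_of_src m 0, comp_zero])

end TorsionPairs
end

section
/- For every object M ∈ 𝒜, one has Ψ^0(M) ∈ X_0 and Ψ^{-2}(M) ∈ X_2. -/
open CategoryTheory Limits ZeroObject HomologicalComplex Abelian

namespace TorsionPairsAux

variable {C : Type*} [Category C] [Abelian C]

/-- The degree `i` component of the canonical (smart) truncation `τ≤n K`. -/
noncomputable def tX (K : CochainComplex C ℤ) (n i : ℤ) : C :=
  if i < n then K.X i else if i = n then K.cycles n else 0

/-- Component iso in degrees `< n`. -/
noncomputable def tXIso (K : CochainComplex C ℤ) (n : ℤ) {i : ℤ} (h : i < n) :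
    tX K n i ≅ K.X i :=
  eqToIso (if_pos h)

/-- Component iso in degree `n`. -/
noncomputable def tXIsoC (K : CochainComplex C ℤ) (n : ℤ) {i : ℤ} (h : i = n) :
    tX K n i ≅ K.cycles n :=
  eqToIso (by rw [tX, if_neg (by omega), if_pos h])

lemma isZero_tX (K : CochainComplex C ℤ) (n : ℤ) {i : ℤ} (h : n < i) :
    IsZero (tX K n i) := by
  rw [tX, if_neg (by omega), if_neg (by omega)]
  exact isZero_zero C

/-- The differential of the truncation. -/
noncomputable def td (K : CochainComplex C ℤ) (n i j : ℤ) : tX K n i ⟶ tX K n j :=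
  if hij : i + 1 = j then
    (if hj : j < n then
      (tXIso K n (by omega)).hom ≫ K.d i j ≫ (tXIso K n hj).inv
     else if hj' : j = n then
      (tXIso K n (by omega)).hom ≫ K.toCycles i n ≫ (tXIsoC K n hj').inv
     else 0)
  else 0

lemma td_eq_zero (K : CochainComplex C ℤ) (n i j : ℤ) (hj : n < j) :
    td K n i j = 0 := by
  rw [td]
  split_ifs with h h1 h2 <;> first | rfl | omega

lemma td_eq_of_lt (K : CochainComplex C ℤ) (n i j : ℤ) (hij : i + 1 = j) (hj : j < n) :
    td K n i j = (tXIso K n (by omega)).hom ≫ K.d i j ≫ (tXIso K n hj).inv := by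
  rw [td, dif_pos hij, dif_pos hj]

lemma td_eq_of_eq (K : CochainComplex C ℤ) (n i j : ℤ) (hij : i + 1 = j) (hj : j = n) :
    td K n i j = (tXIso K n (by omega)).hom ≫ K.toCycles i n ≫ (tXIsoC K n hj).inv := by
  rw [td, dif_pos hij, dif_neg (by omega), dif_pos hj]

/-- The truncation `τ≤n K` of a cochain complex. -/
noncomputable def trunc (K : CochainComplex C ℤ) (n : ℤ) : CochainComplex C ℤ where
  X := tX K n
  d := td K n
  shape i j h := dif_neg (by simpa using h)
  d_comp_d' i j k hij hjk := by
    simp only [ComplexShape.up_Rel] at hij hjk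
    by_cases hk : n < k
    · rw [td_eq_zero K n j k hk, comp_zero]
    by_cases hk' : k < n
    · rw [td_eq_of_lt K n j k hjk hk', td_eq_of_lt K n i j hij (by omega)]
      simp
    · have hk'' : k = n := by omega
      rw [td_eq_of_eq K n j k hjk hk'', td_eq_of_lt K n i j hij (by omega)]
      subst hk''
      simp [K.d_toCycles]

/-- The component of `truncι`. -/
noncomputable def tf (K : CochainComplex C ℤ) (n i : ℤ) : tX K n i ⟶ K.X i :=
  if h : i < n then (tXIso K n h).hom
  else if h' : i = n then (tXIsoC K n h').hom ≫ K.iCycles n ≫ (K.XIsoOfEq h'.symm).hom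
  else 0

lemma tf_eq_of_lt (K : CochainComplex C ℤ) (n i : ℤ) (h : i < n) :
    tf K n i = (tXIso K n h).hom := dif_pos h

lemma tf_eq_of_eq (K : CochainComplex C ℤ) (n : ℤ) :
    tf K n n = (tXIsoC K n rfl).hom ≫ K.iCycles n := by
  rw [tf, dif_neg (by omega), dif_pos rfl]
  simp

/-- The canonical map `τ≤n K ⟶ K`. -/
noncomputable def truncι (K : CochainComplex C ℤ) (n : ℤ) : trunc K n ⟶ K where
  f := tf K n
  comm' i j hij := by
    simp only [ComplexShape.up_Rel] at hij
    subst hij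
    show tf K n i ≫ K.d i (i + 1) = td K n i (i + 1) ≫ tf K n (i + 1)
    by_cases h : i + 1 < n
    · rw [td_eq_of_lt K n i (i+1) rfl h, tf_eq_of_lt K n i (by omega),
        tf_eq_of_lt K n (i+1) h]
      simp
    · by_cases h' : i + 1 = n
      · subst h'
        rw [td_eq_of_eq K (i+1) i (i+1) rfl rfl, tf_eq_of_lt K (i+1) i (by omega),
          tf_eq_of_eq K (i+1)]
        simp
      · rw [td_eq_zero K n i (i+1) (by omega), zero_comp]
        by_cases h'' : i = n
        · subst h''
          rw [tf_eq_of_eq K i]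
          simp
        · rw [tf, dif_neg (by omega), dif_neg h'', zero_comp]

lemma truncι_f (K : CochainComplex C ℤ) (n i : ℤ) : (truncι K n).f i = tf K n i := rfl

lemma trunc_d_eq_zero (K : CochainComplex C ℤ) (n i j : ℤ) (hj : n < j) :
    (trunc K n).d i j = 0 := td_eq_zero K n i j hj


section MiniLemmas

variable {D : Type*} [Category D]

lemma mono_of_isZero_src [HasZeroMorphisms D] {X Y : D} (f : X ⟶ Y) (hX : IsZero X) :
    Mono f :=
  ⟨fun g h _ => hX.eq_of_tgt g h⟩

lemma isIso_of_isZero {X Y : D} (f : X ⟶ Y) [HasZeroMorphisms D] (hX : IsZero X)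
    (hY : IsZero Y) : IsIso f :=
  ⟨0, hX.eq_of_src _ _, hY.eq_of_src _ _⟩

lemma isZero_of_epi_of_isZero [HasZeroMorphisms D] {X Y : D} (f : X ⟶ Y) [Epi f]
    (hX : IsZero X) : IsZero Y := by
  rw [IsZero.iff_id_eq_zero]
  rw [← cancel_epi f, Category.comp_id, comp_zero]
  exact hX.eq_of_src _ _

lemma isZero_of_mono_of_isZero [HasZeroMorphisms D] {X Y : D} (f : X ⟶ Y) [Mono f]
    (hY : IsZero Y) : IsZero X := by
  rw [IsZero.iff_id_eq_zero]
  rw [← cancel_mono f, Category.id_comp, zero_comp]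
  exact hY.eq_of_tgt _ _

end MiniLemmas

section TruncLemmas

variable (K : CochainComplex C ℤ) (n : ℤ)

lemma isIso_tf_of_lt {i : ℤ} (h : i < n) : IsIso (tf K n i) := by
  rw [tf_eq_of_lt K n i h]
  infer_instance

lemma mono_tf (i : ℤ) : Mono (tf K n i) := by
  by_cases h : i < n
  · have := isIso_tf_of_lt K n h
    infer_instance
  · by_cases h' : i = n
    · have heq : tf K n i = (tXIsoC K n h').hom ≫ K.iCycles n ≫ (K.XIsoOfEq h'.symm).hom := by
        rw [tf, dif_neg (by omega), dif_pos h']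
      rw [heq]
      infer_instance
    · exact mono_of_isZero_src _ (isZero_tX K n (by omega))

lemma exactAt_trunc {i : ℤ} (h : n < i) : (trunc K n).ExactAt i := by
  rw [exactAt_iff]
  exact ShortComplex.exact_of_isZero_X₂ _ (isZero_tX K n h)

lemma isZero_homology_trunc {i : ℤ} (h : n < i) : IsZero ((trunc K n).homology i) := by
  rw [← exactAt_iff_isZero_homology]
  exact exactAt_trunc K n h

lemma quasiIsoAt_truncι_of_lt {j : ℤ} (hj : j < n) : QuasiIsoAt (truncι K n) j := by
  rw [quasiIsoAt_iff]
  have h0 : IsIso (((shortComplexFunctor C (ComplexShape.up ℤ) j).map (truncι K n)).τ₁) :=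
    isIso_tf_of_lt K n (by simp only [CochainComplex.prev]; omega)
  have h1 : Epi (((shortComplexFunctor C (ComplexShape.up ℤ) j).map (truncι K n)).τ₁) := by
    exact IsIso.epi_of_iso _
  have h2 : IsIso (((shortComplexFunctor C (ComplexShape.up ℤ) j).map (truncι K n)).τ₂) :=
    isIso_tf_of_lt K n hj
  have h3 : Mono (((shortComplexFunctor C (ComplexShape.up ℤ) j).map (truncι K n)).τ₃) :=
    mono_tf K n _
  exact ShortComplex.quasiIso_of_epi_of_isIso_of_mono _

lemma isIso_cyclesMap_truncι_self : IsIso (cyclesMap (truncι K n) n) := by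
  have hd : (trunc K n).d n (n + 1) = 0 := trunc_d_eq_zero K n n (n + 1) (by omega)
  have heq : cyclesMap (truncι K n) n =
      ((trunc K n).iCyclesIso n (n + 1) (by simp) hd).hom ≫ (tXIsoC K n rfl).hom := by
    rw [← cancel_mono (K.iCycles n), cyclesMap_i]
    rw [truncι_f, tf_eq_of_eq K n]
    simp [iCyclesIso]
    exact (Category.assoc _ _ _).symm
  rw [heq]
  exact IsIso.comp_isIso' (Iso.isIso_hom _) (Iso.isIso_hom _)

lemma quasiIsoAt_truncι_self : QuasiIsoAt (truncι K n) n := by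
  rw [quasiIsoAt_iff_isIso_homologyMap]
  apply ShortComplex.isIso_homologyMap_of_isIso_cyclesMap_of_epi
  · exact isIso_cyclesMap_truncι_self K n
  · have h0 : IsIso (((shortComplexFunctor C (ComplexShape.up ℤ) n).map (truncι K n)).τ₁) :=
      isIso_tf_of_lt K n (by simp only [CochainComplex.prev]; omega)
    exact IsIso.epi_of_iso _

lemma quasiIsoAt_truncι_of_le {j : ℤ} (hj : j ≤ n) : QuasiIsoAt (truncι K n) j := by
  rcases lt_or_eq_of_le hj with h | h
  · exact quasiIsoAt_truncι_of_lt K n h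
  · rw [h]; exact quasiIsoAt_truncι_self K n

/-- The short exact sequence `0 ⟶ τ≤n K ⟶ K ⟶ K/τ≤n K ⟶ 0`. -/
noncomputable def truncSC : ShortComplex (CochainComplex C ℤ) :=
  ShortComplex.mk (truncι K n) (cokernel.π (truncι K n)) (cokernel.condition _)

lemma truncSC_shortExact : (truncSC K n).ShortExact where
  exact := ShortComplex.exact_of_g_is_cokernel _ (cokernelIsCokernel _)
  mono_f := mono_of_mono_f _ (fun i => mono_tf K n i)
  epi_g := by dsimp [truncSC]; infer_instance

/-- The canonical map from `τ≤n K` to the single complex on its top opcycles. -/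
noncomputable def truncToSingle :
    trunc K n ⟶ (single C (ComplexShape.up ℤ) n).obj ((trunc K n).opcycles n) :=
  mkHomToSingle ((trunc K n).pOpcycles n) (fun i _ => (trunc K n).d_pOpcycles i n)

lemma quasiIsoAt_truncToSingle_self : QuasiIsoAt (truncToSingle K n) n := by
  rw [quasiIsoAt_iff_isIso_homologyMap]
  apply ShortComplex.isIso_homologyMap_of_isIso_opcyclesMap_of_mono
  · have hsingle : IsIso ((((single C (ComplexShape.up ℤ) n).obj
        ((trunc K n).opcycles n))).pOpcycles n) := by
      apply isIso_pOpcycles _ (n - 1) n (by simp)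
      exact (isZero_single_obj_X (ComplexShape.up ℤ) n _ (n-1) (by omega)).eq_of_src _ _
    show IsIso (opcyclesMap (truncToSingle K n) n)
    have heq : opcyclesMap (truncToSingle K n) n =
        (singleObjXSelf (ComplexShape.up ℤ) n ((trunc K n).opcycles n)).inv ≫
          (((single C (ComplexShape.up ℤ) n).obj ((trunc K n).opcycles n))).pOpcycles n := by
      rw [← cancel_epi ((trunc K n).pOpcycles n), p_opcyclesMap]
      rw [truncToSingle, mkHomToSingle_f]
      simp
    rw [heq]
    infer_instance
  · exact mono_of_isZero_src _ (isZero_tX K n (by simp only [CochainComplex.next]; omega))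

lemma quasiIso_truncToSingle
    (hconc : ∀ j, j ≠ n → IsZero ((trunc K n).homology j)) :
    QuasiIso (truncToSingle K n) := by
  constructor
  intro j
  by_cases hj : j = n
  · rw [hj]; exact quasiIsoAt_truncToSingle_self K n
  · rw [quasiIsoAt_iff_isIso_homologyMap]
    exact isIso_of_isZero _ (hconc j hj)
      (isZero_single_obj_homology (ComplexShape.up ℤ) n _ j hj)

end TruncLemmas


section DLevel

open DerivedCategory Pretriangulated

variable [HasDerivedCategory C]

/-- Comparison between derived-category homology of `Q.obj K` and complex homology. -/
noncomputable def homologyQIso (K : CochainComplex C ℤ) (j : ℤ) :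
    (DerivedCategory.homologyFunctor C j).obj (Q.obj K) ≅ K.homology j :=
  (homologyFunctorFactors C j).app K

lemma homologyQ_map {K L : CochainComplex C ℤ} (f : K ⟶ L) (j : ℤ) :
    (DerivedCategory.homologyFunctor C j).map (Q.map f) =
      (homologyQIso K j).hom ≫ homologyMap f j ≫ (homologyQIso L j).inv := by
  have h := (homologyFunctorFactors C j).hom.naturality f
  dsimp at h
  rw [← Category.assoc, Iso.eq_comp_inv]
  exact h

lemma isIso_homologyQ_map {K L : CochainComplex C ℤ} (f : K ⟶ L) (j : ℤ)
    [QuasiIsoAt f j] :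
    IsIso ((DerivedCategory.homologyFunctor C j).map (Q.map f)) := by
  rw [homologyQ_map]
  have : IsIso (homologyMap f j) := (quasiIsoAt_iff_isIso_homologyMap f j).1 inferInstance
  infer_instance

lemma isZero_homologyQ_iff (K : CochainComplex C ℤ) (j : ℤ) :
    IsZero ((DerivedCategory.homologyFunctor C j).obj (Q.obj K)) ↔ IsZero (K.homology j) :=
  ⟨fun h => IsZero.of_iso h (homologyQIso K j).symm, fun h => IsZero.of_iso h (homologyQIso K j)⟩

variable (K : CochainComplex C ℤ) (n : ℤ)

/-- The truncation triangle `Q(τ≤n K) → Q(K) → Q(K/τ≤n K) → ⋯` in the derived category. -/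
noncomputable def truncTriangle : Triangle (DerivedCategory C) :=
  triangleOfSES (truncSC_shortExact K n)

lemma truncTriangle_distinguished : truncTriangle K n ∈ distTriang (DerivedCategory C) :=
  triangleOfSES_distinguished (truncSC_shortExact K n)

lemma truncD1 {j : ℤ} (hj : j ≤ n) :
    IsIso ((DerivedCategory.homologyFunctor C j).map (Q.map (truncι K n))) := by
  have := quasiIsoAt_truncι_of_le K n hj
  exact isIso_homologyQ_map _ j

lemma truncD2 {j : ℤ} (hj : n < j) :
    IsZero ((DerivedCategory.homologyFunctor C j).obj (Q.obj (trunc K n))) :=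
  (isZero_homologyQ_iff _ j).2 (isZero_homology_trunc K n hj)

lemma truncD_mor1_eq : (truncTriangle K n).mor₁ = Q.map (truncι K n) := rfl

lemma truncD_mor2_eq : (truncTriangle K n).mor₂ = Q.map (cokernel.π (truncι K n)) := rfl

lemma truncD3 {j : ℤ} (hj : j ≤ n) :
    IsZero ((DerivedCategory.homologyFunctor C j).obj
      (Q.obj (cokernel (truncι K n)))) := by
  have hT := truncTriangle_distinguished K n
  have hmono : Mono ((DerivedCategory.homologyFunctor C (j+1)).map (truncTriangle K n).mor₁) := by
    by_cases hj1 : j + 1 ≤ n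
    · have : IsIso ((DerivedCategory.homologyFunctor C (j+1)).map (truncTriangle K n).mor₁) :=
        truncD1 K n hj1
      infer_instance
    · exact mono_of_isZero_src _ (truncD2 K n (by omega))
  have hδ : HomologySequence.δ (truncTriangle K n) j (j+1) rfl = 0 :=
    (HomologySequence.mono_homologyMap_mor₁_iff (truncTriangle K n) hT j (j+1) rfl).1 hmono
  have hepi : Epi ((DerivedCategory.homologyFunctor C j).map (truncTriangle K n).mor₁) := by
    have : IsIso ((DerivedCategory.homologyFunctor C j).map (truncTriangle K n).mor₁) :=
      truncD1 K n hj
    exact IsIso.epi_of_iso _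
  have hf : (DerivedCategory.homologyFunctor C j).map (truncTriangle K n).mor₂ = 0 := by
    rw [← cancel_epi ((DerivedCategory.homologyFunctor C j).map (truncTriangle K n).mor₁)]
    rw [← Functor.map_comp, comp_distTriang_mor_zero₁₂ _ hT, Functor.map_zero, comp_zero]
  exact (HomologySequence.exact₃ (truncTriangle K n) hT j (j+1) rfl).isZero_X₂ hf hδ

lemma truncD4 {j : ℤ} (hj : n < j) :
    IsIso ((DerivedCategory.homologyFunctor C j).map (truncTriangle K n).mor₂) := by
  have hT := truncTriangle_distinguished K n
  have hmono : Mono ((DerivedCategory.homologyFunctor C j).map (truncTriangle K n).mor₂) := by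
    rw [HomologySequence.mono_homologyMap_mor₂_iff (truncTriangle K n) hT j]
    exact (truncD2 K n hj).eq_of_src _ _
  have hepi : Epi ((DerivedCategory.homologyFunctor C j).map (truncTriangle K n).mor₂) := by
    rw [HomologySequence.epi_homologyMap_mor₂_iff (truncTriangle K n) hT j (j+1) rfl]
    exact (truncD2 K n (by omega)).eq_of_tgt _ _
  exact isIso_of_mono_of_epi _

/-- The component iso `singleFunctor C n ≅ single ⋙ Q` evaluated at an object. -/
noncomputable def singleObjQIso (E : C) :
    (singleFunctor C n).obj E ≅ Q.obj ((single C (ComplexShape.up ℤ) n).obj E) := by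
  have : IsIso (((singleFunctorsPostcompQIso C).hom.hom n).app E) := by
    rw [singleFunctorsPostcompQIso_hom_hom]
    dsimp
    exact IsIso.id _
  exact @asIso _ _ _ _ (((singleFunctorsPostcompQIso C).hom.hom n).app E) this

lemma isZero_homologyD_single {j : ℤ} (hj : j ≠ n) (E : C) :
    IsZero ((DerivedCategory.homologyFunctor C j).obj ((singleFunctor C n).obj E)) :=
  IsZero.of_iso (isZero_single_obj_homology (ComplexShape.up ℤ) n E j hj)
    ((DerivedCategory.homologyFunctor C j).mapIso (singleObjQIso n E) ≪≫ homologyQIso _ j)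

/-- An object of the derived category whose homology is concentrated in degree `a`
is isomorphic to a single object. -/
lemma exists_iso_single (N : DerivedCategory C) (a : ℤ)
    (hN : ∀ j, j ≠ a → IsZero ((DerivedCategory.homologyFunctor C j).obj N)) :
    Nonempty (N ≅ (singleFunctor C a).obj ((DerivedCategory.homologyFunctor C a).obj N)) := by
  haveI : (Q (C := C)).EssSurj :=
    Localization.essSurj _ (HomologicalComplex.quasiIso C (ComplexShape.up ℤ))
  obtain ⟨K, ⟨eK⟩⟩ : ∃ K, Nonempty (Q.obj K ≅ N) :=
    ⟨Q.objPreimage N, ⟨Q.objObjPreimageIso N⟩⟩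
  have hK : ∀ j, j ≠ a → IsZero (K.homology j) := fun j hj =>
    (isZero_homologyQ_iff K j).1
      (IsZero.of_iso (hN j hj) ((DerivedCategory.homologyFunctor C j).mapIso eK))
  haveI : QuasiIso (truncι K a) := by
    constructor
    intro j
    by_cases hj : j ≤ a
    · exact quasiIsoAt_truncι_of_le K a hj
    · rw [quasiIsoAt_iff_isIso_homologyMap]
      exact isIso_of_isZero _ (isZero_homology_trunc K a (by omega)) (hK j (by omega))
  have hThom : ∀ j, j ≠ a → IsZero ((trunc K a).homology j) := by
    intro j hj
    by_cases hj' : j ≤ a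
    · have : QuasiIsoAt (truncι K a) j := quasiIsoAt_truncι_of_le K a hj'
      have : IsIso (homologyMap (truncι K a) j) :=
        (quasiIsoAt_iff_isIso_homologyMap _ j).1 this
      exact IsZero.of_iso (hK j hj) (asIso (homologyMap (truncι K a) j))
    · exact isZero_homology_trunc K a (by omega)
  haveI := quasiIso_truncToSingle K a hThom
  refine ⟨eK.symm ≪≫ (asIso (Q.map (truncι K a))).symm ≪≫ asIso (Q.map (truncToSingle K a))
    ≪≫ (singleObjQIso a _).symm ≪≫ (singleFunctor C a).mapIso ?_⟩
  exact ((trunc K a).isoHomologyι a (a+1) (by simp)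
      (trunc_d_eq_zero K a a (a+1) (by omega))).symm
    ≪≫ (homologyQIso (trunc K a) a).symm
    ≪≫ (DerivedCategory.homologyFunctor C a).mapIso (asIso (Q.map (truncι K a)) ≪≫ eK)

end DLevel


section Shifts

variable {B : Type*} [Category B] [Abelian B] [HasDerivedCategory B]

/-- Homology of a shift in the derived category. -/
noncomputable def homologyShiftIso (X : DerivedCategory B) (m j j' : ℤ) (h : m + j = j') :
    (DerivedCategory.homologyFunctor B j).obj (X⟦m⟧) ≅
      (DerivedCategory.homologyFunctor B j').obj X :=
  ((DerivedCategory.homologyFunctor B 0).shiftIso m j j' h).app X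

/-- `singleFunctor B a` is a shift of `singleFunctor B 0`. -/
noncomputable def singleShiftIso (a : ℤ) (E : B) :
    (DerivedCategory.singleFunctor B a).obj E ≅
      ((DerivedCategory.singleFunctor B 0).obj E)⟦(-a : ℤ)⟧ :=
  (((DerivedCategory.singleFunctors B).shiftIso (-a) a 0 (by omega)).app E).symm

end Shifts

section Equiv

open DerivedCategory Pretriangulated

variable {Z : Type*} [Category Z] [Abelian Z] [HasDerivedCategory Z]
variable {A : Type*} [Category A] [Abelian A] [HasDerivedCategory A]
variable (Φ : DerivedCategory Z ≌ DerivedCategory A)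

/-- `H^j (Φ (single_a E)) ≅ Φ^{j-a} E`. -/
noncomputable def phiSingleShiftIso [Φ.functor.CommShift ℤ] (a j : ℤ) (E : Z) :
    (DerivedCategory.homologyFunctor A j).obj
        (Φ.functor.obj ((DerivedCategory.singleFunctor Z a).obj E)) ≅
      (DerivedCategory.homologyFunctor A (j - a)).obj
        (Φ.functor.obj ((DerivedCategory.singleFunctor Z 0).obj E)) :=
  (DerivedCategory.homologyFunctor A j).mapIso (Φ.functor.mapIso (singleShiftIso a E))
    ≪≫ (DerivedCategory.homologyFunctor A j).mapIso
        ((Φ.functor.commShiftIso (-a : ℤ)).app ((DerivedCategory.singleFunctor Z 0).obj E))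
    ≪≫ homologyShiftIso (Φ.functor.obj ((DerivedCategory.singleFunctor Z 0).obj E))
        (-a) j (j - a) (by omega)

variable (hΦ : ∀ (E : Z) (j : ℤ), j < 0 ∨ 2 < j →
    IsZero ((DerivedCategory.homologyFunctor A j).obj
      (Φ.functor.obj ((DerivedCategory.singleFunctor Z 0).obj E))))

include hΦ in
/-- Base case of the amplitude lemma: `Φ` of an object concentrated in degree `a`
has homology concentrated in `[a, a+2]`. -/
lemma amp_zero [Φ.functor.CommShift ℤ] (a : ℤ) (N : DerivedCategory Z)
    (hN : ∀ j, j ≠ a → IsZero ((DerivedCategory.homologyFunctor Z j).obj N)) :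
    ∀ j, j < a ∨ a + 2 < j →
      IsZero ((DerivedCategory.homologyFunctor A j).obj (Φ.functor.obj N)) := by
  obtain ⟨e⟩ := exists_iso_single N a hN
  intro j hj
  have h1 : IsZero ((DerivedCategory.homologyFunctor A (j - a)).obj
      (Φ.functor.obj ((DerivedCategory.singleFunctor Z 0).obj
        ((DerivedCategory.homologyFunctor Z a).obj N)))) := hΦ _ _ (by omega)
  exact IsZero.of_iso h1
    ((DerivedCategory.homologyFunctor A j).mapIso (Φ.functor.mapIso e) ≪≫
      phiSingleShiftIso Φ a j _)

include hΦ in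
/-- The amplitude lemma: if `N` has homology in `[a, a+k]`, then `Φ N` has homology
in `[a, a+k+2]`. -/
lemma amp [Φ.functor.CommShift ℤ] [Φ.functor.IsTriangulated] (k : ℕ) :
    ∀ (a : ℤ) (N : DerivedCategory Z),
      (∀ j, j < a ∨ a + k < j → IsZero ((DerivedCategory.homologyFunctor Z j).obj N)) →
      ∀ j, j < a ∨ a + k + 2 < j →
        IsZero ((DerivedCategory.homologyFunctor A j).obj (Φ.functor.obj N)) := by
  induction k with
  | zero =>
    intro a N hN j hj
    exact amp_zero Φ hΦ a N (fun i hi => hN i (by omega)) j (by push_cast at hj ⊢; omega)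
  | succ k ih =>
    intro a N hN
    haveI : (Q (C := Z)).EssSurj :=
      Localization.essSurj _ (HomologicalComplex.quasiIso Z (ComplexShape.up ℤ))
    obtain ⟨K, ⟨eK⟩⟩ : ∃ K, Nonempty (Q.obj K ≅ N) :=
      ⟨Q.objPreimage N, ⟨Q.objObjPreimageIso N⟩⟩
    have hKN : ∀ j, j < a ∨ a + (k + 1 : ℕ) < j →
        IsZero ((DerivedCategory.homologyFunctor Z j).obj (Q.obj K)) := fun j hj =>
      IsZero.of_iso (hN j hj) ((DerivedCategory.homologyFunctor Z j).mapIso eK)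
    set n := a + (k : ℤ) with hn
    -- homology bounds for the truncation
    have hTbound : ∀ j, j < a ∨ a + (k : ℕ) < j →
        IsZero ((DerivedCategory.homologyFunctor Z j).obj (Q.obj (trunc K n))) := by
      intro j hj
      rcases hj with hj | hj
      · have : IsIso ((DerivedCategory.homologyFunctor Z j).map (Q.map (truncι K n))) :=
          truncD1 K n (by omega)
        exact IsZero.of_iso (hKN j (Or.inl hj))
          (asIso ((DerivedCategory.homologyFunctor Z j).map (Q.map (truncι K n))))
      · exact truncD2 K n (by omega)
    have hΦT := ih a (Q.obj (trunc K n)) hTbound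
    -- the quotient is concentrated in degree `n+1`
    have hGconc : ∀ j, j ≠ n + 1 →
        IsZero ((DerivedCategory.homologyFunctor Z j).obj
          (Q.obj (cokernel (truncι K n)))) := by
      intro j hj
      by_cases hj' : j ≤ n
      · exact truncD3 K n hj'
      · have hgt : n + 1 < j := by omega
        have : IsIso ((DerivedCategory.homologyFunctor Z j).map (truncTriangle K n).mor₂) :=
          truncD4 K n (by omega)
        exact @isZero_of_epi_of_isZero _ _ _ _ _
          ((DerivedCategory.homologyFunctor Z j).map (truncTriangle K n).mor₂)
          (@IsIso.epi_of_iso _ _ _ _ _ this)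
          (hKN j (Or.inr (by push_cast; omega)))
    have hΦG := amp_zero Φ hΦ (n + 1) _ hGconc
    -- conclude via the long exact sequence
    intro j hj
    have hdist := Φ.functor.map_distinguished _ (truncTriangle_distinguished K n)
    have ex := HomologySequence.exact₂ (Φ.functor.mapTriangle.obj (truncTriangle K n)) hdist j
    have h1 : IsZero ((DerivedCategory.homologyFunctor A j).obj
        (Φ.functor.obj (Q.obj (trunc K n)))) := by
      apply hΦT
      push_cast at hj ⊢
      omega
    have h3 : IsZero ((DerivedCategory.homologyFunctor A j).obj
        (Φ.functor.obj (Q.obj (cokernel (truncι K n))))) := by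
      apply hΦG
      push_cast at hj ⊢
      omega
    have h2 := ex.isZero_X₂ (h1.eq_of_src _ _) (h3.eq_of_tgt _ _)
    exact IsZero.of_iso h2
      ((DerivedCategory.homologyFunctor A j).mapIso (Φ.functor.mapIso eK.symm))

end Equiv

end TorsionPairsAux



open CategoryTheory Limits Abelian

namespace TorsionPairs

universe w w' v u v' u'

variable {C : Type u} [Category.{v} C] [Abelian C]

variable {Z : Type u} [Category.{v} Z] [Abelian Z] [HasDerivedCategory.{w} Z]
variable {A : Type u'} [Category.{v'} A] [Abelian A] [HasDerivedCategory.{w'} A]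

/-- `Φ^i(E) := H^i(Φ(E)) ∈ 𝒜`, for `E ∈ 𝒵` and an equivalence
`Φ : D(𝒵) ≌ D(𝒜)` of derived categories. -/
noncomputable def PhiH (Φ : DerivedCategory Z ≌ DerivedCategory A) (i : ℤ) (E : Z) : A :=
  (DerivedCategory.homologyFunctor A i).obj
    (Φ.functor.obj ((DerivedCategory.singleFunctor Z 0).obj E))

/-- `Ψ^j(M) := H^j(Ψ(M)) ∈ 𝒵`, for `M ∈ 𝒜`, where `Ψ` is the quasi-inverse of `Φ`. -/
noncomputable def PsiH (Φ : DerivedCategory Z ≌ DerivedCategory A) (j : ℤ) (M : A) : Z :=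
  (DerivedCategory.homologyFunctor Z j).obj
    (Φ.inverse.obj ((DerivedCategory.singleFunctor A 0).obj M))

/-- `X_i := {E ∈ 𝒵 : Φ^j(E) = 0 for all j ≠ i}`. -/
def XClass (Φ : DerivedCategory Z ≌ DerivedCategory A) (i : ℤ) : Z → Prop :=
  fun E => ∀ j : ℤ, j ≠ i → IsZero (PhiH Φ j E)

/-- `B_i := {E ∈ 𝒵 : Φ^i(E) = 0}`. -/
def BClassD (Φ : DerivedCategory Z ≌ DerivedCategory A) (i : ℤ) : Z → Prop :=
  fun E => IsZero (PhiH Φ i E)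

/-- `Y_i := {M ∈ 𝒜 : Ψ^j(M) = 0 for all j ≠ i}`. -/
def YClass (Φ : DerivedCategory Z ≌ DerivedCategory A) (i : ℤ) : A → Prop :=
  fun M => ∀ j : ℤ, j ≠ i → IsZero (PsiH Φ j M)

/-- `C_i := {M ∈ 𝒜 : Ψ^i(M) = 0}`. -/
def CClass (Φ : DerivedCategory Z ≌ DerivedCategory A) (i : ℤ) : A → Prop :=
  fun M => IsZero (PsiH Φ i M)

/-- `K_0`: the class of cokernels of monomorphisms from objects of `X_2` to objects of
`X_0`, i.e. objects `E` fitting in a short exact sequence `0 → A → B → E → 0` with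
`A ∈ X_2` and `B ∈ X_0`. -/
def K0Class (Φ : DerivedCategory Z ≌ DerivedCategory A) : Z → Prop :=
  fun E => ∃ (A' B' : Z) (f : A' ⟶ B') (g : B' ⟶ E),
    XClass Φ 2 A' ∧ XClass Φ 0 B' ∧ IsShortExactSeq f g

/-- `K_2`: the class of kernels of epimorphisms from objects of `X_2` onto objects of
`X_0`, i.e. objects `E` fitting in a short exact sequence `0 → E → A → B → 0` with
`A ∈ X_2` and `B ∈ X_0`. -/
def K2Class (Φ : DerivedCategory Z ≌ DerivedCategory A) : Z → Prop :=
  fun E => ∃ (A' B' : Z) (f : E ⟶ A') (g : A' ⟶ B'),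
    XClass Φ 2 A' ∧ XClass Φ 0 B' ∧ IsShortExactSeq f g

/-- For every `M ∈ 𝒜`, `Ψ⁰(M) ∈ X₀` and `Ψ⁻²(M) ∈ X₂`. -/
theorem psiH_zero_mem_X0_and_psiH_neg_two_mem_X2
    (Φ : DerivedCategory Z ≌ DerivedCategory A)
    [Φ.functor.CommShift ℤ] [Φ.functor.IsTriangulated]
    (hΦ : ∀ (E : Z) (j : ℤ), j < 0 ∨ 2 < j → IsZero (PhiH Φ j E))
    (hΨ : ∀ (M : A) (j : ℤ), j < -2 ∨ 0 < j → IsZero (PsiH Φ j M)) :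
    ∀ M : A, XClass Φ 0 (PsiH Φ 0 M) ∧ XClass Φ 2 (PsiH Φ (-2) M) := by
  intro M
  set N := Φ.inverse.obj ((DerivedCategory.singleFunctor A 0).obj M) with hNdef
  have hNbound : ∀ j : ℤ, j < -2 ∨ 0 < j →
      IsZero ((DerivedCategory.homologyFunctor Z j).obj N) := fun j hj => hΨ M j hj
  haveI : (DerivedCategory.Q (C := Z)).EssSurj :=
    Localization.essSurj _ (HomologicalComplex.quasiIso Z (ComplexShape.up ℤ))
  obtain ⟨K, ⟨eK⟩⟩ : ∃ K, Nonempty (DerivedCategory.Q.obj K ≅ N) :=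
    ⟨DerivedCategory.Q.objPreimage N, ⟨DerivedCategory.Q.objObjPreimageIso N⟩⟩
  have hKN : ∀ j : ℤ, j < -2 ∨ 0 < j →
      IsZero ((DerivedCategory.homologyFunctor Z j).obj (DerivedCategory.Q.obj K)) :=
    fun j hj => IsZero.of_iso (hNbound j hj) ((DerivedCategory.homologyFunctor Z j).mapIso eK)
  haveI hq0 : QuasiIso (TorsionPairsAux.truncι K 0) := by
    constructor
    intro j
    by_cases hj : j ≤ 0
    · exact TorsionPairsAux.quasiIsoAt_truncι_of_le K 0 hj
    · rw [quasiIsoAt_iff_isIso_homologyMap]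
      exact TorsionPairsAux.isIso_of_isZero _
        (TorsionPairsAux.isZero_homology_trunc K 0 (by omega))
        ((TorsionPairsAux.isZero_homologyQ_iff K j).1 (hKN j (Or.inr (by omega))))
  set K₀ := TorsionPairsAux.trunc K 0 with hK₀def
  have e₀ : DerivedCategory.Q.obj K₀ ≅ N :=
    asIso (DerivedCategory.Q.map (TorsionPairsAux.truncι K 0)) ≪≫ eK
  have hK₀z : ∀ j : ℤ, j < -2 ∨ 0 < j →
      IsZero ((DerivedCategory.homologyFunctor Z j).obj (DerivedCategory.Q.obj K₀)) :=
    fun j hj => IsZero.of_iso (hNbound j hj) ((DerivedCategory.homologyFunctor Z j).mapIso e₀)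
  have eΦK₀ : Φ.functor.obj (DerivedCategory.Q.obj K₀) ≅
      (DerivedCategory.singleFunctor A 0).obj M :=
    Φ.functor.mapIso e₀ ≪≫ Φ.counitIso.app _
  have hΦK₀ : ∀ j : ℤ, j ≠ 0 → IsZero ((DerivedCategory.homologyFunctor A j).obj
      (Φ.functor.obj (DerivedCategory.Q.obj K₀))) := fun j hj =>
    IsZero.of_iso (TorsionPairsAux.isZero_homologyD_single 0 hj M)
      ((DerivedCategory.homologyFunctor A j).mapIso eΦK₀)
  constructor
  · -- `Ψ⁰(M) ∈ X₀`
    have hdist := Φ.functor.map_distinguished _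
      (TorsionPairsAux.truncTriangle_distinguished K₀ (-1))
    have hT₁bound : ∀ j : ℤ, j < -2 ∨ -1 < j →
        IsZero ((DerivedCategory.homologyFunctor Z j).obj
          (DerivedCategory.Q.obj (TorsionPairsAux.trunc K₀ (-1)))) := by
      intro j hj
      rcases hj with hj | hj
      · have : IsIso ((DerivedCategory.homologyFunctor Z j).map
            (DerivedCategory.Q.map (TorsionPairsAux.truncι K₀ (-1)))) :=
          TorsionPairsAux.truncD1 K₀ (-1) (by omega)
        exact IsZero.of_iso (hK₀z j (Or.inl hj))
          (asIso ((DerivedCategory.homologyFunctor Z j).map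
            (DerivedCategory.Q.map (TorsionPairsAux.truncι K₀ (-1)))))
      · exact TorsionPairsAux.truncD2 K₀ (-1) hj
    have hΦT₁ := TorsionPairsAux.amp Φ hΦ 1 (-2)
      (DerivedCategory.Q.obj (TorsionPairsAux.trunc K₀ (-1)))
      (fun j hj => hT₁bound j (by push_cast at hj; omega))
    have hG₁conc : ∀ j : ℤ, j ≠ 0 →
        IsZero ((DerivedCategory.homologyFunctor Z j).obj
          (DerivedCategory.Q.obj (cokernel (TorsionPairsAux.truncι K₀ (-1))))) := by
      intro j hj
      by_cases hj' : j ≤ -1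
      · exact TorsionPairsAux.truncD3 K₀ (-1) hj'
      · have : IsIso ((DerivedCategory.homologyFunctor Z j).map
            (TorsionPairsAux.truncTriangle K₀ (-1)).mor₂) :=
          TorsionPairsAux.truncD4 K₀ (-1) (by omega)
        exact @TorsionPairsAux.isZero_of_epi_of_isZero _ _ _ _ _
          ((DerivedCategory.homologyFunctor Z j).map
            (TorsionPairsAux.truncTriangle K₀ (-1)).mor₂) (@IsIso.epi_of_iso _ _ _ _ _ this) (hK₀z j (Or.inr (by omega)))
    have hiso0 : IsIso ((DerivedCategory.homologyFunctor Z 0).map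
        (TorsionPairsAux.truncTriangle K₀ (-1)).mor₂) :=
      TorsionPairsAux.truncD4 K₀ (-1) (by omega)
    have eH0 : (DerivedCategory.homologyFunctor Z 0).obj
        (DerivedCategory.Q.obj (cokernel (TorsionPairsAux.truncι K₀ (-1)))) ≅
          PsiH Φ 0 M :=
      (asIso ((DerivedCategory.homologyFunctor Z 0).map
        (TorsionPairsAux.truncTriangle K₀ (-1)).mor₂)).symm ≪≫
        (DerivedCategory.homologyFunctor Z 0).mapIso e₀
    obtain ⟨eG⟩ := TorsionPairsAux.exists_iso_single
      (DerivedCategory.Q.obj (cokernel (TorsionPairsAux.truncι K₀ (-1)))) 0 hG₁conc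
    have eG' : DerivedCategory.Q.obj (cokernel (TorsionPairsAux.truncι K₀ (-1))) ≅
        (DerivedCategory.singleFunctor Z 0).obj (PsiH Φ 0 M) :=
      eG ≪≫ (DerivedCategory.singleFunctor Z 0).mapIso eH0
    intro j hj
    have key : IsZero ((DerivedCategory.homologyFunctor A j).obj (Φ.functor.obj
        (DerivedCategory.Q.obj (cokernel (TorsionPairsAux.truncι K₀ (-1)))))) →
        IsZero (PhiH Φ j (PsiH Φ 0 M)) := fun hi =>
      IsZero.of_iso hi ((DerivedCategory.homologyFunctor A j).mapIso
        (Φ.functor.mapIso eG'.symm))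
    by_cases h2 : j < 0 ∨ 2 < j
    · exact hΦ _ _ h2
    · have hj12 : j = 1 ∨ j = 2 := by omega
      apply key
      rcases hj12 with rfl | rfl
      · have ex := DerivedCategory.HomologySequence.exact₃
          (Φ.functor.mapTriangle.obj (TorsionPairsAux.truncTriangle K₀ (-1))) hdist 1 2 rfl
        exact ex.isZero_X₂ ((hΦK₀ 1 (by omega)).eq_of_src _ _)
          ((hΦT₁ 2 (by norm_num)).eq_of_tgt _ _)
      · have ex := DerivedCategory.HomologySequence.exact₃
          (Φ.functor.mapTriangle.obj (TorsionPairsAux.truncTriangle K₀ (-1))) hdist 2 3 rfl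
        exact ex.isZero_X₂ ((hΦK₀ 2 (by omega)).eq_of_src _ _)
          ((hΦT₁ 3 (by norm_num)).eq_of_tgt _ _)
  · -- `Ψ⁻²(M) ∈ X₂`
    have hdist₂ := Φ.functor.map_distinguished _
      (TorsionPairsAux.truncTriangle_distinguished K₀ (-2))
    have hT₂conc : ∀ j : ℤ, j ≠ -2 →
        IsZero ((DerivedCategory.homologyFunctor Z j).obj
          (DerivedCategory.Q.obj (TorsionPairsAux.trunc K₀ (-2)))) := by
      intro j hj
      by_cases hj' : j ≤ -2
      · have : IsIso ((DerivedCategory.homologyFunctor Z j).map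
            (DerivedCategory.Q.map (TorsionPairsAux.truncι K₀ (-2)))) :=
          TorsionPairsAux.truncD1 K₀ (-2) hj'
        exact IsZero.of_iso (hK₀z j (Or.inl (by omega)))
          (asIso ((DerivedCategory.homologyFunctor Z j).map
            (DerivedCategory.Q.map (TorsionPairsAux.truncι K₀ (-2)))))
      · exact TorsionPairsAux.truncD2 K₀ (-2) (by omega)
    have hisom2 : IsIso ((DerivedCategory.homologyFunctor Z (-2)).map
        (TorsionPairsAux.truncTriangle K₀ (-2)).mor₁) :=
      TorsionPairsAux.truncD1 K₀ (-2) (by omega)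
    have eH2 : (DerivedCategory.homologyFunctor Z (-2)).obj
        (DerivedCategory.Q.obj (TorsionPairsAux.trunc K₀ (-2))) ≅ PsiH Φ (-2) M :=
      @asIso _ _ _ _ ((DerivedCategory.homologyFunctor Z (-2)).map
        (TorsionPairsAux.truncTriangle K₀ (-2)).mor₁) hisom2 ≪≫
        (DerivedCategory.homologyFunctor Z (-2)).mapIso e₀
    obtain ⟨eT⟩ := TorsionPairsAux.exists_iso_single
      (DerivedCategory.Q.obj (TorsionPairsAux.trunc K₀ (-2))) (-2) hT₂conc
    have eT' : DerivedCategory.Q.obj (TorsionPairsAux.trunc K₀ (-2)) ≅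
        (DerivedCategory.singleFunctor Z (-2)).obj (PsiH Φ (-2) M) :=
      eT ≪≫ (DerivedCategory.singleFunctor Z (-2)).mapIso eH2
    have hG₂bound : ∀ j : ℤ, j < -1 ∨ 0 < j →
        IsZero ((DerivedCategory.homologyFunctor Z j).obj
          (DerivedCategory.Q.obj (cokernel (TorsionPairsAux.truncι K₀ (-2))))) := by
      intro j hj
      by_cases hj' : j ≤ -2
      · exact TorsionPairsAux.truncD3 K₀ (-2) hj'
      · have : IsIso ((DerivedCategory.homologyFunctor Z j).map
            (TorsionPairsAux.truncTriangle K₀ (-2)).mor₂) :=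
          TorsionPairsAux.truncD4 K₀ (-2) (by omega)
        exact @TorsionPairsAux.isZero_of_epi_of_isZero _ _ _ _ _
          ((DerivedCategory.homologyFunctor Z j).map
            (TorsionPairsAux.truncTriangle K₀ (-2)).mor₂) (@IsIso.epi_of_iso _ _ _ _ _ this) (hK₀z j (Or.inr (by omega)))
    have hΦG₂ := TorsionPairsAux.amp Φ hΦ 1 (-1)
      (DerivedCategory.Q.obj (cokernel (TorsionPairsAux.truncι K₀ (-2))))
      (fun j hj => hG₂bound j (by push_cast at hj; omega))
    intro j hj
    by_cases h2 : j < 0 ∨ 2 < j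
    · exact hΦ _ _ h2
    · have hj01 : j = 0 ∨ j = 1 := by omega
      suffices hsuff : IsZero ((DerivedCategory.homologyFunctor A (j - 2)).obj
          (Φ.functor.obj (DerivedCategory.Q.obj (TorsionPairsAux.trunc K₀ (-2))))) by
        have e1 : (DerivedCategory.homologyFunctor A (j - 2)).obj
            (Φ.functor.obj (DerivedCategory.Q.obj (TorsionPairsAux.trunc K₀ (-2)))) ≅
            (DerivedCategory.homologyFunctor A (j - 2)).obj (Φ.functor.obj
              ((DerivedCategory.singleFunctor Z (-2)).obj (PsiH Φ (-2) M))) :=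
          (DerivedCategory.homologyFunctor A (j - 2)).mapIso (Φ.functor.mapIso eT')
        have e2 := TorsionPairsAux.phiSingleShiftIso Φ (-2) (j - 2) (PsiH Φ (-2) M)
        have h' : IsZero ((DerivedCategory.homologyFunctor A (j - 2 - -2)).obj
            (Φ.functor.obj ((DerivedCategory.singleFunctor Z 0).obj (PsiH Φ (-2) M)))) :=
          IsZero.of_iso hsuff (e2.symm ≪≫ e1.symm)
        rw [show j - 2 - -2 = j by omega] at h'
        exact h'
      rcases hj01 with rfl | rfl
      · have ex := DerivedCategory.HomologySequence.exact₁
          (Φ.functor.mapTriangle.obj (TorsionPairsAux.truncTriangle K₀ (-2))) hdist₂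
          (-3) (-2) (by omega)
        exact ex.isZero_X₂ ((hΦG₂ (-3) (by norm_num)).eq_of_src _ _)
          ((hΦK₀ (-2) (by omega)).eq_of_tgt _ _)
      · have ex := DerivedCategory.HomologySequence.exact₁
          (Φ.functor.mapTriangle.obj (TorsionPairsAux.truncTriangle K₀ (-2))) hdist₂
          (-2) (-1) (by omega)
        exact ex.isZero_X₂ ((hΦG₂ (-2) (by norm_num)).eq_of_src _ _)
          ((hΦK₀ (-1) (by omega)).eq_of_tgt _ _)

end TorsionPairs
end
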